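/- arXiv:2203.12174 — 5 statements merged into one kernel-verified Lean document; each statement's English description precedes it below -/
import Mathlib

section
/- In a post-Hopf algebra (H, ▷), the antipode is natural with respect to ▷: for all x, y in H, S(x ▷ y) = x ▷ S(y). -/
/-!
Post-Hopf algebras (Li–Sheng–Tang). We work over a commutative ring `R`.
`Coalgebra.comul (A := H ⊗[R] H)` refers to the standard coalgebra structure
on the tensor product, so that `comul_rhd`/`counit_rhd` say exactly that
`▷ : H ⊗ H → H` is a coalgebra homomorphism.  Sweedler sums such as
`(x₁ ▷ y)·(x₂ ▷ z)` are expressed by applying suitable linear maps to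
`Coalgebra.comul x`.
-/

open TensorProduct Coalgebra LinearMap HopfAlgebra

variable (R H : Type*) [CommRing R] [Ring H] [HopfAlgebra R H]

/-- The subadjacent product `x *▷ y = x₁ · (x₂ ▷ y)` as a linear map
`H ⊗ H → H`, built from a binary operation `rhd : H ⊗ H →ₗ H`. -/
noncomputable def subProd (rhd : H ⊗[R] H →ₗ[R] H) : H ⊗[R] H →ₗ[R] H :=
  LinearMap.mul' R H ∘ₗ TensorProduct.map LinearMap.id rhd
    ∘ₗ (TensorProduct.assoc R H H H).toLinearMap
    ∘ₗ TensorProduct.map Coalgebra.comul LinearMap.id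

/-- Convolution product on `Hom(H, End(H))`: `(f * g)(x) = f(x₁) ∘ g(x₂)`. -/
noncomputable def convEnd (f g : H →ₗ[R] Module.End R H) : H →ₗ[R] Module.End R H :=
  LinearMap.mul' R (Module.End R H) ∘ₗ TensorProduct.map f g ∘ₗ Coalgebra.comul

/-- The unit `x ↦ ε(x)·id` of the convolution algebra `Hom(H, End(H))`. -/
noncomputable def convUnit : H →ₗ[R] Module.End R H :=
  Algebra.linearMap R (Module.End R H) ∘ₗ Coalgebra.counit

/-- A post-Hopf algebra structure on the Hopf algebra `H`: a coalgebra
homomorphism `▷ : H ⊗ H → H` satisfying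
`x ▷ (y·z) = (x₁ ▷ y)·(x₂ ▷ z)`, `x ▷ (y ▷ z) = (x₁·(x₂ ▷ y)) ▷ z`, and
such that `α : H → End H`, `α_x = x ▷ -`, is convolution invertible. -/
structure PostHopf : Type _ where
  /-- the binary operation `▷` -/
  rhd : H ⊗[R] H →ₗ[R] H
  /-- `▷` is comultiplicative -/
  comul_rhd : Coalgebra.comul ∘ₗ rhd
      = TensorProduct.map rhd rhd ∘ₗ (Coalgebra.comul (R := R) (A := H ⊗[R] H))
  /-- `▷` is counital -/
  counit_rhd : Coalgebra.counit ∘ₗ rhd = (Coalgebra.counit (R := R) (A := H ⊗[R] H))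
  /-- `x ▷ (y·z) = (x₁ ▷ y)·(x₂ ▷ z)` -/
  rhd_mul : ∀ x y z : H,
    rhd (x ⊗ₜ (y * z))
      = LinearMap.mul' R H
          (TensorProduct.map (rhd ∘ₗ (TensorProduct.mk R H H).flip y)
            (rhd ∘ₗ (TensorProduct.mk R H H).flip z) (Coalgebra.comul x))
  /-- `x ▷ (y ▷ z) = (x₁·(x₂ ▷ y)) ▷ z` -/
  rhd_rhd : ∀ x y z : H,
    rhd (x ⊗ₜ rhd (y ⊗ₜ z)) = rhd (subProd R H rhd (x ⊗ₜ y) ⊗ₜ z)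
  /-- `α : x ↦ (x ▷ -)` is convolution invertible in `Hom(H, End H)` -/
  conv_invertible : ∃ β : H →ₗ[R] Module.End R H,
    convEnd R H ((TensorProduct.mk R H H).compr₂ rhd) β = convUnit R H ∧
    convEnd R H β ((TensorProduct.mk R H H).compr₂ rhd) = convUnit R H

/-- Cocommutativity of the coalgebra `H`. -/
def IsCocomm : Prop :=
  ∀ x : H, (TensorProduct.comm R H H) (Coalgebra.comul x) = Coalgebra.comul x

/-- The subadjacent antipode `S▷(x) = β_{x₁}(S(x₂))`, built from a
convolution inverse `β` of the left multiplication. -/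
noncomputable def subAntipode (β : H →ₗ[R] Module.End R H) : H →ₗ[R] H :=
  TensorProduct.lift (β.compl₂ (HopfAlgebra.antipode (R := R) (A := H)))
    ∘ₗ Coalgebra.comul

/-- An element is primitive if `Δ(x) = 1 ⊗ x + x ⊗ 1`. -/
def IsPrimitive (x : H) : Prop :=
  Coalgebra.comul (R := R) x = (1 : H) ⊗ₜ x + x ⊗ₜ (1 : H)

namespace PostHopfAux


section TensorCoalg

variable {R A B : Type*} [CommRing R] [AddCommGroup A] [AddCommGroup B]
  [Module R A] [Module R B] [Coalgebra R A] [Coalgebra R B]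

lemma tensor_coassoc :
    (TensorProduct.assoc R (A ⊗[R] B) (A ⊗[R] B) (A ⊗[R] B)).toLinearMap
        ∘ₗ (Coalgebra.comul (R := R) (A := A ⊗[R] B)).rTensor (A ⊗[R] B)
        ∘ₗ Coalgebra.comul
      = (Coalgebra.comul (R := R) (A := A ⊗[R] B)).lTensor (A ⊗[R] B)
        ∘ₗ Coalgebra.comul := by
  -- notation
  set K := (TensorProduct.tensorTensorTensorComm R A A B B).toLinearMap with hK
  have hcomul : (Coalgebra.comul (R := R) (A := A ⊗[R] B))
      = K ∘ₗ TensorProduct.map Coalgebra.comul Coalgebra.comul := rfl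
  set Λ : ((A ⊗[R] A) ⊗[R] A) ⊗[R] ((B ⊗[R] B) ⊗[R] B) →ₗ[R]
      (A ⊗[R] B) ⊗[R] ((A ⊗[R] B) ⊗[R] (A ⊗[R] B)) :=
    (TensorProduct.assoc R (A ⊗[R] B) (A ⊗[R] B) (A ⊗[R] B)).toLinearMap
      ∘ₗ K.rTensor (A ⊗[R] B)
      ∘ₗ (TensorProduct.tensorTensorTensorComm R (A ⊗[R] A) A (B ⊗[R] B) B).toLinearMap
    with hΛ
  set Λ' : (A ⊗[R] (A ⊗[R] A)) ⊗[R] (B ⊗[R] (B ⊗[R] B)) →ₗ[R]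
      (A ⊗[R] B) ⊗[R] ((A ⊗[R] B) ⊗[R] (A ⊗[R] B)) :=
    K.lTensor (A ⊗[R] B)
      ∘ₗ (TensorProduct.tensorTensorTensorComm R A (A ⊗[R] A) B (B ⊗[R] B)).toLinearMap
    with hΛ'
  have hΘ : ((TensorProduct.assoc R (A ⊗[R] B) (A ⊗[R] B) (A ⊗[R] B)).toLinearMap
      ∘ₗ (K ∘ₗ TensorProduct.map Coalgebra.comul Coalgebra.comul).rTensor (A ⊗[R] B)) ∘ₗ K
      = Λ ∘ₗ TensorProduct.map
          ((Coalgebra.comul (R := R) (A := A)).rTensor A)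
          ((Coalgebra.comul (R := R) (A := B)).rTensor B) := by
    ext a₁ a₂ b₁ b₂
    simp [hΛ, hK, hcomul]
  have hΘ' : (K ∘ₗ TensorProduct.map Coalgebra.comul Coalgebra.comul).lTensor (A ⊗[R] B) ∘ₗ K
      = Λ' ∘ₗ TensorProduct.map
          ((Coalgebra.comul (R := R) (A := A)).lTensor A)
          ((Coalgebra.comul (R := R) (A := B)).lTensor B) := by
    ext a₁ a₂ b₁ b₂
    simp [hΛ', hK, hcomul]
  have hbridge : Λ ∘ₗ TensorProduct.map
        (TensorProduct.assoc R A A A).symm.toLinearMap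
        (TensorProduct.assoc R B B B).symm.toLinearMap = Λ' := by
    apply TensorProduct.ext_fourfold'
    intro a₁ u b₁ v
    induction u using TensorProduct.induction_on with
    | zero => simp
    | tmul a₂ a₃ =>
      induction v using TensorProduct.induction_on with
      | zero => simp
      | tmul b₂ b₃ => simp [hΛ, hΛ', hK]
      | add v₁ v₂ h₁ h₂ => simp only [tmul_add, add_tmul, map_add, h₁, h₂]
    | add u₁ u₂ h₁ h₂ => simp only [tmul_add, add_tmul, map_add, h₁, h₂]
  rw [hcomul]
  simp only [← LinearMap.comp_assoc]
  rw [hΘ, hΘ']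
  simp only [LinearMap.comp_assoc]
  rw [← TensorProduct.map_comp, ← TensorProduct.map_comp,
    ← Coalgebra.coassoc_symm (R := R) (A := A), ← Coalgebra.coassoc_symm (R := R) (A := B),
    TensorProduct.map_comp, ← LinearMap.comp_assoc, hbridge]

lemma tensor_rTensor_counit :
    (Coalgebra.counit (R := R) (A := A ⊗[R] B)).rTensor (A ⊗[R] B)
        ∘ₗ Coalgebra.comul
      = TensorProduct.mk R R (A ⊗[R] B) 1 := by
  set K := (TensorProduct.tensorTensorTensorComm R A A B B).toLinearMap with hK
  have hcomul : (Coalgebra.comul (R := R) (A := A ⊗[R] B))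
      = K ∘ₗ TensorProduct.map Coalgebra.comul Coalgebra.comul := rfl
  set μ : (R ⊗[R] A) ⊗[R] (R ⊗[R] B) →ₗ[R] R ⊗[R] (A ⊗[R] B) :=
    (LinearMap.mul' R R).rTensor (A ⊗[R] B)
      ∘ₗ (TensorProduct.tensorTensorTensorComm R R A R B).toLinearMap with hμ
  have hΦ : (Coalgebra.counit (R := R) (A := A ⊗[R] B)).rTensor (A ⊗[R] B) ∘ₗ K
      = μ ∘ₗ TensorProduct.map
          ((Coalgebra.counit (R := R) (A := A)).rTensor A)
          ((Coalgebra.counit (R := R) (A := B)).rTensor B) := by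
    ext a₁ a₂ b₁ b₂
    simp [hμ, hK]
    rw [mul_comm]
  rw [hcomul, ← LinearMap.comp_assoc, hΦ, LinearMap.comp_assoc,
    ← TensorProduct.map_comp, Coalgebra.rTensor_counit_comp_comul,
    Coalgebra.rTensor_counit_comp_comul]
  ext a b
  simp [hμ]

lemma tensor_lTensor_counit :
    (Coalgebra.counit (R := R) (A := A ⊗[R] B)).lTensor (A ⊗[R] B)
        ∘ₗ Coalgebra.comul
      = (TensorProduct.mk R (A ⊗[R] B) R).flip 1 := by
  set K := (TensorProduct.tensorTensorTensorComm R A A B B).toLinearMap with hK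
  have hcomul : (Coalgebra.comul (R := R) (A := A ⊗[R] B))
      = K ∘ₗ TensorProduct.map Coalgebra.comul Coalgebra.comul := rfl
  set μ : (A ⊗[R] R) ⊗[R] (B ⊗[R] R) →ₗ[R] (A ⊗[R] B) ⊗[R] R :=
    (LinearMap.mul' R R).lTensor (A ⊗[R] B)
      ∘ₗ (TensorProduct.tensorTensorTensorComm R A R B R).toLinearMap with hμ
  have hΦ : (Coalgebra.counit (R := R) (A := A ⊗[R] B)).lTensor (A ⊗[R] B) ∘ₗ K
      = μ ∘ₗ TensorProduct.map
          ((Coalgebra.counit (R := R) (A := A)).lTensor A)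
          ((Coalgebra.counit (R := R) (A := B)).lTensor B) := by
    ext a₁ a₂ b₁ b₂
    simp [hμ, hK]
    rw [mul_comm]
  rw [hcomul, ← LinearMap.comp_assoc, hΦ, LinearMap.comp_assoc,
    ← TensorProduct.map_comp, Coalgebra.lTensor_counit_comp_comul,
    Coalgebra.lTensor_counit_comp_comul]
  ext a b
  simp [hμ]

noncomputable instance instTensorCoalgebra : Coalgebra R (A ⊗[R] B) :=
  { TensorProduct.instCoalgebraStruct with
    coassoc := tensor_coassoc
    rTensor_counit_comp_comul := tensor_rTensor_counit
    lTensor_counit_comp_comul := tensor_lTensor_counit }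

end TensorCoalg



section Conv

variable {R : Type*} [CommRing R]
variable {C : Type*} [AddCommGroup C] [Module R C] [Coalgebra R C]
variable {A : Type*} [Ring A] [Algebra R A]

/-- Convolution product on `Hom(C, A)`. -/
noncomputable def conv (f g : C →ₗ[R] A) : C →ₗ[R] A :=
  LinearMap.mul' R A ∘ₗ TensorProduct.map f g ∘ₗ Coalgebra.comul

/-- Convolution unit. -/
noncomputable def cunit : C →ₗ[R] A := Algebra.linearMap R A ∘ₗ Coalgebra.counit

lemma conv_apply (f g : C →ₗ[R] A) {c : C} {ι : Type*} (r : Coalgebra.Repr R c ι) :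
    conv f g c = ∑ i ∈ r.index, f (r.left i) * g (r.right i) := by
  have : conv f g c
      = LinearMap.mul' R A (TensorProduct.map f g (Coalgebra.comul c)) := rfl
  rw [this, ← r.eq]
  simp

lemma conv_assoc (f g h : C →ₗ[R] A) : conv (conv f g) h = conv f (conv g h) := by
  refine LinearMap.ext fun c => ?_
  set r := ℛ R c with hr
  set r1 : (i : r.ι) → Coalgebra.Repr R (r.left i) (C × C) := fun i => ℛ R (r.left i) with hr1
  set r2 : (i : r.ι) → Coalgebra.Repr R (r.right i) (C × C) := fun i => ℛ R (r.right i) with hr2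
  have key := congrArg (LinearMap.mul' R A ∘ₗ (LinearMap.mul' R A).lTensor A
      ∘ₗ TensorProduct.map f (TensorProduct.map g h)) (Coalgebra.sum_tmul_tmul_eq r r1 r2)
  simp only [map_sum, LinearMap.coe_comp, Function.comp_apply, TensorProduct.map_tmul,
    LinearMap.lTensor_tmul, LinearMap.mul'_apply] at key
  rw [conv_apply (conv f g) h r, conv_apply f (conv g h) r]
  calc ∑ i ∈ r.index, conv f g (r.left i) * h (r.right i)
      = ∑ i ∈ r.index, ∑ j ∈ (r1 i).index,
          f ((r1 i).left j) * ((g ((r1 i).right j)) * h (r.right i)) := by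
        refine Finset.sum_congr rfl fun i _ => ?_
        rw [conv_apply f g (r1 i), Finset.sum_mul]
        exact Finset.sum_congr rfl fun j _ => mul_assoc _ _ _
    _ = ∑ i ∈ r.index, ∑ j ∈ (r2 i).index,
          f (r.left i) * (g ((r2 i).left j) * h ((r2 i).right j)) := key
    _ = ∑ i ∈ r.index, f (r.left i) * conv g h (r.right i) := by
        refine Finset.sum_congr rfl fun i _ => ?_
        rw [conv_apply g h (r2 i), Finset.mul_sum]

lemma cunit_conv (g : C →ₗ[R] A) : conv cunit g = g := by
  refine LinearMap.ext fun c => ?_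
  set r := ℛ R c with hr
  have key := congrArg (TensorProduct.lid R C) (Coalgebra.sum_counit_tmul_eq r)
  simp only [map_sum, TensorProduct.lid_tmul] at key
  rw [conv_apply cunit g r]
  have : ∀ i, (cunit (R := R) (C := C) (A := A)) (r.left i) * g (r.right i)
      = g (Coalgebra.counit (R := R) (r.left i) • r.right i) := by
    intro i
    rw [map_smul]
    rw [show (cunit (R := R) (C := C) (A := A)) (r.left i)
      = algebraMap R A (Coalgebra.counit (R := R) (r.left i)) from rfl]
    rw [← Algebra.smul_def]
  rw [Finset.sum_congr rfl fun i _ => this i, ← map_sum, key, one_smul]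

lemma conv_cunit (f : C →ₗ[R] A) : conv f cunit = f := by
  refine LinearMap.ext fun c => ?_
  set r := ℛ R c with hr
  have key := congrArg (TensorProduct.rid R C) (Coalgebra.sum_tmul_counit_eq r)
  simp only [map_sum, TensorProduct.rid_tmul] at key
  rw [conv_apply f cunit r]
  have : ∀ i, f (r.left i) * (cunit (R := R) (C := C) (A := A)) (r.right i)
      = f (Coalgebra.counit (R := R) (r.right i) • r.left i) := by
    intro i
    rw [map_smul]
    rw [show (cunit (R := R) (C := C) (A := A)) (r.right i)
      = algebraMap R A (Coalgebra.counit (R := R) (r.right i)) from rfl]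
    rw [← Algebra.commutes, ← Algebra.smul_def]
  rw [Finset.sum_congr rfl fun i _ => this i, ← map_sum, key, one_smul]

variable {H' : Type*} [Ring H'] [HopfAlgebra R H']

lemma conv_antipode_comp_left (φ : C →ₗ[R] H')
    (h1 : Coalgebra.comul ∘ₗ φ = TensorProduct.map φ φ ∘ₗ Coalgebra.comul)
    (h2 : Coalgebra.counit ∘ₗ φ = Coalgebra.counit) :
    conv ((HopfAlgebra.antipode (R := R) (A := H')) ∘ₗ φ) φ = cunit := by
  unfold conv
  rw [← LinearMap.rTensor_comp_map, LinearMap.comp_assoc, ← h1]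
  rw [show ((HopfAlgebra.antipode (R := R) (A := H')).rTensor H') ∘ₗ
      (Coalgebra.comul ∘ₗ φ)
    = (((HopfAlgebra.antipode (R := R) (A := H')).rTensor H') ∘ₗ Coalgebra.comul) ∘ₗ φ
    from rfl]
  rw [← LinearMap.comp_assoc, HopfAlgebra.mul_antipode_rTensor_comul,
    LinearMap.comp_assoc, h2]
  rfl

lemma conv_antipode_comp_right (φ : C →ₗ[R] H')
    (h1 : Coalgebra.comul ∘ₗ φ = TensorProduct.map φ φ ∘ₗ Coalgebra.comul)
    (h2 : Coalgebra.counit ∘ₗ φ = Coalgebra.counit) :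
    conv φ ((HopfAlgebra.antipode (R := R) (A := H')) ∘ₗ φ) = cunit := by
  unfold conv
  rw [← LinearMap.lTensor_comp_map, LinearMap.comp_assoc, ← h1]
  rw [show ((HopfAlgebra.antipode (R := R) (A := H')).lTensor H') ∘ₗ
      (Coalgebra.comul ∘ₗ φ)
    = (((HopfAlgebra.antipode (R := R) (A := H')).lTensor H') ∘ₗ Coalgebra.comul) ∘ₗ φ
    from rfl]
  rw [← LinearMap.comp_assoc, HopfAlgebra.mul_antipode_lTensor_comul,
    LinearMap.comp_assoc, h2]
  rfl

end Conv


section Main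

variable {R H : Type*} [CommRing R] [Ring H] [HopfAlgebra R H]

lemma comul_tmul {A B : Type*} [AddCommGroup A] [AddCommGroup B] [Module R A] [Module R B]
    [Coalgebra R A] [Coalgebra R B] (a : A) (b : B) :
    Coalgebra.comul (R := R) (a ⊗ₜ[R] b)
      = TensorProduct.tensorTensorTensorComm R A A B B
          (Coalgebra.comul a ⊗ₜ Coalgebra.comul b) := rfl

lemma counit_tmul {A B : Type*} [AddCommGroup A] [AddCommGroup B] [Module R A] [Module R B]
    [Coalgebra R A] [Coalgebra R B] (a : A) (b : B) :
    Coalgebra.counit (R := R) (a ⊗ₜ[R] b)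
      = Coalgebra.counit (R := R) a * Coalgebra.counit (R := R) b := by rw [mul_comm]; rfl

/-- An explicit representation of `comul (a ⊗ₜ b)` built from representations of
`comul a` and `comul b`. -/
noncomputable def tmulRepr {A B : Type*} [AddCommGroup A] [AddCommGroup B] [Module R A]
    [Module R B] [Coalgebra R A] [Coalgebra R B] {a : A} {b : B} {ι κ : Type*}
    (rx : Coalgebra.Repr R a ι) (ry : Coalgebra.Repr R b κ) :
    Coalgebra.Repr R (a ⊗ₜ[R] b : A ⊗[R] B) (ι × κ) where
  index := rx.index ×ˢ ry.index
  left := fun p => rx.left p.1 ⊗ₜ ry.left p.2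
  right := fun p => rx.right p.1 ⊗ₜ ry.right p.2
  eq := by
    rw [show CoalgebraStruct.comul (R := R) (a ⊗ₜ[R] b : A ⊗[R] B)
        = TensorProduct.tensorTensorTensorComm R A A B B
            (Coalgebra.comul a ⊗ₜ Coalgebra.comul b) from rfl,
      ← rx.eq, ← ry.eq]
    rw [Finset.sum_product]
    simp only [TensorProduct.sum_tmul, TensorProduct.tmul_sum, map_sum,
      TensorProduct.tensorTensorTensorComm_tmul]
    exact Finset.sum_comm

variable (P : PostHopf R H)

lemma rhd_mul_repr {x : H} {ι : Type*} (r : Coalgebra.Repr R x ι) (u v : H) :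
    P.rhd (x ⊗ₜ (u * v))
      = ∑ i ∈ r.index, P.rhd (r.left i ⊗ₜ u) * P.rhd (r.right i ⊗ₜ v) := by
  rw [P.rhd_mul x u v, ← r.eq]
  simp

lemma rhd_one (x : H) :
    P.rhd (x ⊗ₜ (1 : H)) = algebraMap R H (Coalgebra.counit (R := R) x) := by
  set u : H →ₗ[R] H := P.rhd ∘ₗ (TensorProduct.mk R H H).flip 1 with hu
  have hu_apply : ∀ c : H, u c = P.rhd (c ⊗ₜ 1) := fun c => rfl
  have h1 : Coalgebra.comul ∘ₗ u = TensorProduct.map u u ∘ₗ Coalgebra.comul := by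
    refine LinearMap.ext fun c => ?_
    have hc := LinearMap.congr_fun P.comul_rhd (c ⊗ₜ (1 : H))
    simp only [LinearMap.coe_comp, Function.comp_apply] at hc ⊢
    rw [hu_apply, hc, comul_tmul, Bialgebra.comul_one]
    set r := ℛ R c with hr
    rw [← r.eq]
    rw [TensorProduct.sum_tmul]
    simp [hu_apply, Algebra.TensorProduct.one_def]
  have h2 : Coalgebra.counit ∘ₗ u = Coalgebra.counit (R := R) (A := H) := by
    refine LinearMap.ext fun c => ?_
    have hc := LinearMap.congr_fun P.counit_rhd (c ⊗ₜ (1 : H))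
    simp only [LinearMap.coe_comp, Function.comp_apply] at hc ⊢
    rw [hu_apply, hc, counit_tmul, Bialgebra.counit_one, mul_one]
  have hidem : conv u u = u := by
    refine LinearMap.ext fun c => ?_
    rw [conv_apply u u (ℛ R c), hu_apply c,
      show (1 : H) = 1 * 1 from (one_mul 1).symm,
      rhd_mul_repr P (ℛ R c) 1 1]
    rfl
  have hinv := conv_antipode_comp_right u h1 h2
  have hcu : u = cunit := by
    calc u = conv u cunit := (conv_cunit u).symm
      _ = conv u (conv u ((HopfAlgebra.antipode (R := R) (A := H)) ∘ₗ u)) := by rw [hinv]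
      _ = conv (conv u u) ((HopfAlgebra.antipode (R := R) (A := H)) ∘ₗ u) :=
          (conv_assoc _ _ _).symm
      _ = conv u ((HopfAlgebra.antipode (R := R) (A := H)) ∘ₗ u) := by rw [hidem]
      _ = cunit := hinv
  exact (hu_apply x).symm.trans (LinearMap.congr_fun hcu x)

lemma conv_T_G : conv P.rhd (P.rhd ∘ₗ (HopfAlgebra.antipode (R := R) (A := H)).lTensor H)
    = cunit := by
  refine TensorProduct.ext' fun a b => ?_
  set rx := ℛ R a with hrx
  set ry := ℛ R b with hry
  have h0 : conv P.rhd (P.rhd ∘ₗ (HopfAlgebra.antipode (R := R) (A := H)).lTensor H) (a ⊗ₜ b)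
      = ∑ p ∈ rx.index ×ˢ ry.index,
          P.rhd (rx.left p.1 ⊗ₜ ry.left p.2) *
            P.rhd (rx.right p.1 ⊗ₜ HopfAlgebra.antipode (R := R) (ry.right p.2)) :=
    conv_apply _ _ (tmulRepr rx ry)
  rw [h0, Finset.sum_product_right]
  have hj : ∀ j ∈ ry.index,
      ∑ i ∈ rx.index, P.rhd (rx.left i ⊗ₜ ry.left j) *
          P.rhd (rx.right i ⊗ₜ HopfAlgebra.antipode (R := R) (ry.right j))
        = P.rhd (a ⊗ₜ (ry.left j * HopfAlgebra.antipode (R := R) (ry.right j))) :=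
    fun j _ => (rhd_mul_repr P rx _ _).symm
  rw [Finset.sum_congr rfl hj, ← map_sum, ← TensorProduct.tmul_sum]
  rw [show ∑ j ∈ ry.index, ry.left j * HopfAlgebra.antipode (R := R) (ry.right j)
      = algebraMap R H (Coalgebra.counit (R := R) b) from HopfAlgebra.sum_mul_antipode_eq_algebraMap_counit ry]
  rw [Algebra.algebraMap_eq_smul_one, TensorProduct.tmul_smul, map_smul, rhd_one P a]
  rw [show (cunit : H ⊗[R] H →ₗ[R] H) (a ⊗ₜ b)
      = algebraMap R H (Coalgebra.counit (R := R) (a ⊗ₜ[R] b)) from rfl, counit_tmul]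
  rw [Algebra.smul_def, ← map_mul, mul_comm]

end Main

end PostHopfAux

/-- In a post-Hopf algebra `(H, ▷)`, the antipode satisfies
`S(x ▷ y) = x ▷ S(y)`. -/
theorem antipode_rhd (P : PostHopf R H) (x y : H) :
    HopfAlgebra.antipode (R := R) (A := H) (P.rhd (x ⊗ₜ y))
      = P.rhd (x ⊗ₜ HopfAlgebra.antipode (R := R) (A := H) y) := by
  classical
  set T := P.rhd with hT
  set S : H →ₗ[R] H := HopfAlgebra.antipode (R := R) (A := H) with hS
  set F : H ⊗[R] H →ₗ[R] H := S ∘ₗ T with hF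
  set G : H ⊗[R] H →ₗ[R] H := T ∘ₗ S.lTensor H with hG
  have h1 : Coalgebra.comul ∘ₗ T = TensorProduct.map T T ∘ₗ Coalgebra.comul := P.comul_rhd
  have h2 : Coalgebra.counit ∘ₗ T = Coalgebra.counit (R := R) (A := H ⊗[R] H) := P.counit_rhd
  have hFT : PostHopfAux.conv F T = PostHopfAux.cunit :=
    PostHopfAux.conv_antipode_comp_left T h1 h2
  have hTG : PostHopfAux.conv T G = PostHopfAux.cunit := PostHopfAux.conv_T_G P
  have hFG : F = G := by
    calc F = PostHopfAux.conv F PostHopfAux.cunit := (PostHopfAux.conv_cunit F).symm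
      _ = PostHopfAux.conv F (PostHopfAux.conv T G) := by rw [hTG]
      _ = PostHopfAux.conv (PostHopfAux.conv F T) G := (PostHopfAux.conv_assoc F T G).symm
      _ = PostHopfAux.conv PostHopfAux.cunit G := by rw [hFT]
      _ = G := PostHopfAux.cunit_conv G
  have := LinearMap.congr_fun hFG (x ⊗ₜ y)
  simpa [hF, hG] using this
end

section
/- Let (H, ▷) be a cocommutative post-Hopf algebra. Then the subadjacent product x *▷ y := x₁·(x₂ ▷ y) is associative. -/
/-!
Post-Hopf algebras (Li–Sheng–Tang). We work over a commutative ring `R`.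
`Coalgebra.comul (A := H ⊗[R] H)` refers to the standard coalgebra structure
on the tensor product, so that `comul_rhd`/`counit_rhd` say exactly that
`▷ : H ⊗ H → H` is a coalgebra homomorphism.  Sweedler sums such as
`(x₁ ▷ y)·(x₂ ▷ z)` are expressed by applying suitable linear maps to
`Coalgebra.comul x`.
-/

open TensorProduct Coalgebra LinearMap HopfAlgebra

variable (R H : Type*) [CommRing R] [Ring H] [HopfAlgebra R H]

/- ### auxiliary lemmas -/

private lemma sum_swap₄ {M : Type*} [AddCommMonoid M] {ι κ : Type*}
    {τ υ : ι → Type*} (s : Finset ι) (v : Finset κ)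
    (t : (i : ι) → Finset (τ i)) (u : (i : ι) → Finset (υ i))
    (F : (i : ι) → τ i → υ i → κ → M) :
    ∑ i ∈ s, ∑ l ∈ t i, ∑ j ∈ u i, ∑ k ∈ v, F i l j k
      = ∑ k ∈ v, ∑ i ∈ s, ∑ l ∈ t i, ∑ j ∈ u i, F i l j k := by
  refine Eq.trans (Finset.sum_congr rfl fun i _ =>
    Eq.trans (Finset.sum_congr rfl fun l _ => Finset.sum_comm)
      Finset.sum_comm) Finset.sum_comm

private lemma subProd_repr_apply (rhd : H ⊗[R] H →ₗ[R] H) (a b : H)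
    (ρ : Coalgebra.Repr R a (H × H)) :
    subProd R H rhd (a ⊗ₜ b) = ∑ i ∈ ρ.index, ρ.left i * rhd (ρ.right i ⊗ₜ b) := by
  simp only [subProd, LinearMap.comp_apply, TensorProduct.map_tmul, LinearMap.id_apply]
  rw [← ρ.eq]
  simp [TensorProduct.sum_tmul, LinearMap.mul'_apply]

private lemma subProd_eq (rhd : H ⊗[R] H →ₗ[R] H) (w b : H) :
    subProd R H rhd (w ⊗ₜ b)
      = LinearMap.mul' R H (TensorProduct.map LinearMap.id rhd
          ((TensorProduct.assoc R H H H) (Coalgebra.comul (R := R) w ⊗ₜ b))) := by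
  simp [subProd]

private lemma rhd_mul_repr (P : PostHopf R H) (a u w : H) (ρ : Coalgebra.Repr R a (H × H)) :
    P.rhd (a ⊗ₜ (u * w))
      = ∑ i ∈ ρ.index, P.rhd (ρ.left i ⊗ₜ u) * P.rhd (ρ.right i ⊗ₜ w) := by
  rw [P.rhd_mul a u w, ← ρ.eq]
  simp [LinearMap.mul'_apply]

private lemma comul_rhd_repr (P : PostHopf R H) (a b : H)
    (ρa : Coalgebra.Repr R a (H × H)) (ρb : Coalgebra.Repr R b (H × H)) :
    Coalgebra.comul (R := R) (P.rhd (a ⊗ₜ b))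
      = ∑ i ∈ ρa.index, ∑ j ∈ ρb.index,
          P.rhd (ρa.left i ⊗ₜ ρb.left j) ⊗ₜ P.rhd (ρa.right i ⊗ₜ ρb.right j) := by
  have h := LinearMap.congr_fun P.comul_rhd (a ⊗ₜ b)
  simp only [LinearMap.comp_apply, TensorProduct.comul_tmul,
    TensorProduct.map_tmul] at h
  rw [h, ← ρa.eq, ← ρb.eq]
  simp [TensorProduct.sum_tmul, TensorProduct.tmul_sum]
  exact Finset.sum_comm

private noncomputable def phi (rhd : H ⊗[R] H →ₗ[R] H) (u v z : H) :
    H ⊗[R] (H ⊗[R] (H ⊗[R] H)) →ₗ[R] H :=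
  LinearMap.mul' R H ∘ₗ TensorProduct.map LinearMap.id
    (LinearMap.mul' R H ∘ₗ TensorProduct.map
      (rhd ∘ₗ (TensorProduct.mk R H H).flip u)
      (rhd ∘ₗ (TensorProduct.mk R H H).flip z ∘ₗ LinearMap.mul' R H ∘ₗ
        TensorProduct.map LinearMap.id (rhd ∘ₗ (TensorProduct.mk R H H).flip v)))

private lemma phi_apply (rhd : H ⊗[R] H →ₗ[R] H) (u v z a b c d : H) :
    phi R H rhd u v z (a ⊗ₜ (b ⊗ₜ (c ⊗ₜ d)))
      = a * (rhd (b ⊗ₜ u) * rhd ((c * rhd (d ⊗ₜ v)) ⊗ₜ z)) := by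
  simp [phi, LinearMap.mul'_apply]


/-- In a cocommutative post-Hopf algebra, the subadjacent product
`x *▷ y = x₁·(x₂ ▷ y)` is associative. -/
theorem subProd_assoc (P : PostHopf R H) (hcop : _root_.IsCocomm R H) (x y z : H) :
    subProd R H P.rhd (subProd R H P.rhd (x ⊗ₜ y) ⊗ₜ z)
      = subProd R H P.rhd (x ⊗ₜ subProd R H P.rhd (y ⊗ₜ z)) := by
  classical
  let ρx : Coalgebra.Repr R x (H × H) := Coalgebra.Repr.arbitrary R x
  let ρy : Coalgebra.Repr R y (H × H) := Coalgebra.Repr.arbitrary R y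
  let ρ1 : (i : H × H) → Coalgebra.Repr R (ρx.left i) (H × H) := fun _ => Coalgebra.Repr.arbitrary R _
  let ρ2 : (i : H × H) → Coalgebra.Repr R (ρx.right i) (H × H) := fun _ => Coalgebra.Repr.arbitrary R _
  let ρ22 : (i : H × H) → (j : H × H) → Coalgebra.Repr R ((ρ2 i).right j) (H × H) :=
    fun _ _ => Coalgebra.Repr.arbitrary R _
  set t₁ : H ⊗[R] (H ⊗[R] (H ⊗[R] H)) :=
    ∑ i ∈ ρx.index, ∑ l ∈ (ρ1 i).index, ∑ j ∈ (ρ2 i).index,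
      (ρ1 i).left l ⊗ₜ ((ρ2 i).left j ⊗ₜ ((ρ1 i).right l ⊗ₜ (ρ2 i).right j)) with ht₁
  set t₂ : H ⊗[R] (H ⊗[R] (H ⊗[R] H)) :=
    ∑ i ∈ ρx.index, ∑ j ∈ (ρ2 i).index, ∑ m ∈ (ρ22 i j).index,
      ρx.left i ⊗ₜ ((ρ2 i).left j ⊗ₜ ((ρ22 i j).left m ⊗ₜ (ρ22 i j).right m)) with ht₂
  -- the swap map S and cocommutativity
  set S : H ⊗[R] (H ⊗[R] H) →ₗ[R] H ⊗[R] (H ⊗[R] H) :=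
    (TensorProduct.assoc R H H H).toLinearMap
      ∘ₗ LinearMap.rTensor H (TensorProduct.comm R H H).toLinearMap
      ∘ₗ (TensorProduct.assoc R H H H).symm.toLinearMap with hSdef
  have hS : ∀ a b c : H, S (a ⊗ₜ (b ⊗ₜ c)) = b ⊗ₜ (a ⊗ₜ c) := by
    intro a b c; simp [hSdef]
  have hτcomp : (TensorProduct.comm R H H).toLinearMap
      ∘ₗ (Coalgebra.comul (R := R) (A := H)) = Coalgebra.comul :=
    LinearMap.ext fun w => hcop w
  have hs : ∀ w : H,
      S (LinearMap.lTensor H (Coalgebra.comul (R := R) (A := H)) (Coalgebra.comul w))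
        = LinearMap.lTensor H (Coalgebra.comul (R := R) (A := H)) (Coalgebra.comul w) := by
    intro w
    have h2 := Coalgebra.coassoc_symm_apply (R := R) (A := H) w
    have h3 := Coalgebra.coassoc_apply (R := R) (A := H) w
    simp only [hSdef, LinearMap.comp_apply, LinearEquiv.coe_coe]
    rw [h2, ← LinearMap.comp_apply, ← LinearMap.rTensor_comp, hτcomp, h3]
  -- key identity t₁ = t₂
  have hB : ∀ i : H × H,
      (LinearMap.lTensor H (Coalgebra.comul (R := R) (A := H))) (Coalgebra.comul (ρx.right i))
        = ∑ j ∈ (ρ2 i).index, (ρ2 i).left j ⊗ₜ[R] Coalgebra.comul (R := R) ((ρ2 i).right j) := by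
    intro i; rw [← (ρ2 i).eq]; simp
  have key : t₁ = t₂ := by
    have h0 := Coalgebra.sum_tmul_tmul_eq (R := R) ρx ρ1 ρ2
    have h1 := congrArg
      (LinearMap.lTensor H (LinearMap.lTensor H (Coalgebra.comul (R := R) (A := H)))) h0
    simp only [map_sum, LinearMap.lTensor_tmul] at h1
    have hA : (LinearMap.lTensor H S) (∑ i ∈ ρx.index, ∑ l ∈ (ρ1 i).index,
        (ρ1 i).left l ⊗ₜ[R] ((ρ1 i).right l ⊗ₜ[R] Coalgebra.comul (R := R) (ρx.right i)))
        = t₁ := by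
      rw [ht₁]
      simp only [map_sum]
      refine Finset.sum_congr rfl fun i _ => Finset.sum_congr rfl fun l _ => ?_
      rw [← (ρ2 i).eq]
      simp [TensorProduct.tmul_sum, hS]
    calc t₁ = (LinearMap.lTensor H S) (∑ i ∈ ρx.index, ∑ l ∈ (ρ1 i).index,
            (ρ1 i).left l ⊗ₜ[R] ((ρ1 i).right l ⊗ₜ[R] Coalgebra.comul (R := R) (ρx.right i))) :=
          hA.symm
      _ = (LinearMap.lTensor H S) (∑ i ∈ ρx.index, ∑ j ∈ (ρ2 i).index,
            ρx.left i ⊗ₜ[R] ((ρ2 i).left j ⊗ₜ[R] Coalgebra.comul (R := R) ((ρ2 i).right j))) := by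
          rw [h1]
      _ = (LinearMap.lTensor H S) (∑ i ∈ ρx.index, ρx.left i ⊗ₜ[R]
            (LinearMap.lTensor H (Coalgebra.comul (R := R) (A := H))
              (Coalgebra.comul (ρx.right i)))) := by
          refine congrArg _ (Finset.sum_congr rfl fun i _ => ?_)
          rw [hB i, TensorProduct.tmul_sum]
      _ = ∑ i ∈ ρx.index, ρx.left i ⊗ₜ[R]
            (LinearMap.lTensor H (Coalgebra.comul (R := R) (A := H))
              (Coalgebra.comul (ρx.right i))) := by
          simp only [map_sum, LinearMap.lTensor_tmul]
          exact Finset.sum_congr rfl fun i _ => by rw [hs (ρx.right i)]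
      _ = ∑ i ∈ ρx.index, ∑ j ∈ (ρ2 i).index,
            ρx.left i ⊗ₜ[R] ((ρ2 i).left j ⊗ₜ[R] Coalgebra.comul (R := R) ((ρ2 i).right j)) :=
          Finset.sum_congr rfl fun i _ => by rw [hB i, TensorProduct.tmul_sum]
      _ = t₂ := by
          rw [ht₂]
          refine Finset.sum_congr rfl fun i _ => Finset.sum_congr rfl fun j _ => ?_
          rw [← (ρ22 i j).eq]
          simp [TensorProduct.tmul_sum]
  -- left-hand side
  have hw : subProd R H P.rhd (x ⊗ₜ y)
      = ∑ i ∈ ρx.index, ρx.left i * P.rhd (ρx.right i ⊗ₜ y) :=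
    subProd_repr_apply R H P.rhd x y ρx
  have hcw : Coalgebra.comul (R := R) (subProd R H P.rhd (x ⊗ₜ y))
      = ∑ i ∈ ρx.index, ∑ l ∈ (ρ1 i).index, ∑ j ∈ (ρ2 i).index, ∑ k ∈ ρy.index,
          ((ρ1 i).left l * P.rhd ((ρ2 i).left j ⊗ₜ ρy.left k))
            ⊗ₜ ((ρ1 i).right l * P.rhd ((ρ2 i).right j ⊗ₜ ρy.right k)) := by
    rw [hw, map_sum]
    refine Finset.sum_congr rfl fun i _ => ?_
    rw [Bialgebra.comul_mul, comul_rhd_repr R H P _ _ (ρ2 i) ρy, ← (ρ1 i).eq]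
    simp [Finset.sum_mul, Finset.mul_sum, Algebra.TensorProduct.tmul_mul_tmul]
    exact Eq.trans (Finset.sum_congr rfl fun j _ => Finset.sum_comm) Finset.sum_comm
  have hLHS : subProd R H P.rhd (subProd R H P.rhd (x ⊗ₜ y) ⊗ₜ z)
      = ∑ k ∈ ρy.index, ∑ i ∈ ρx.index, ∑ l ∈ (ρ1 i).index, ∑ j ∈ (ρ2 i).index,
          (ρ1 i).left l * (P.rhd ((ρ2 i).left j ⊗ₜ ρy.left k)
            * P.rhd (((ρ1 i).right l * P.rhd ((ρ2 i).right j ⊗ₜ ρy.right k)) ⊗ₜ z)) := by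
    rw [subProd_eq R H P.rhd (subProd R H P.rhd (x ⊗ₜ y)) z, hcw]
    simp only [TensorProduct.sum_tmul, map_sum, TensorProduct.assoc_tmul,
      TensorProduct.map_tmul, LinearMap.id_apply, LinearMap.mul'_apply, mul_assoc]
    exact sum_swap₄ _ _ _ _ _
  -- right-hand side
  have hRHS : subProd R H P.rhd (x ⊗ₜ subProd R H P.rhd (y ⊗ₜ z))
      = ∑ k ∈ ρy.index, ∑ i ∈ ρx.index, ∑ j ∈ (ρ2 i).index, ∑ m ∈ (ρ22 i j).index,
          ρx.left i * (P.rhd ((ρ2 i).left j ⊗ₜ ρy.left k)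
            * P.rhd (((ρ22 i j).left m * P.rhd ((ρ22 i j).right m ⊗ₜ ρy.right k)) ⊗ₜ z)) := by
    rw [subProd_repr_apply R H P.rhd y z ρy, subProd_repr_apply R H P.rhd x _ ρx]
    calc ∑ i ∈ ρx.index, ρx.left i * P.rhd (ρx.right i ⊗ₜ
            (∑ k ∈ ρy.index, ρy.left k * P.rhd (ρy.right k ⊗ₜ z)))
        = ∑ i ∈ ρx.index, ∑ k ∈ ρy.index,
            ρx.left i * P.rhd (ρx.right i ⊗ₜ (ρy.left k * P.rhd (ρy.right k ⊗ₜ z))) := by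
          simp [TensorProduct.tmul_sum, Finset.mul_sum]
      _ = ∑ i ∈ ρx.index, ∑ k ∈ ρy.index, ∑ j ∈ (ρ2 i).index,
            ρx.left i * (P.rhd ((ρ2 i).left j ⊗ₜ ρy.left k)
              * P.rhd ((ρ2 i).right j ⊗ₜ P.rhd (ρy.right k ⊗ₜ z))) := by
          refine Finset.sum_congr rfl fun i _ => Finset.sum_congr rfl fun k _ => ?_
          rw [rhd_mul_repr R H P _ _ _ (ρ2 i), Finset.mul_sum]
      _ = ∑ i ∈ ρx.index, ∑ k ∈ ρy.index, ∑ j ∈ (ρ2 i).index, ∑ m ∈ (ρ22 i j).index,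
            ρx.left i * (P.rhd ((ρ2 i).left j ⊗ₜ ρy.left k)
              * P.rhd (((ρ22 i j).left m * P.rhd ((ρ22 i j).right m ⊗ₜ ρy.right k)) ⊗ₜ z)) := by
          refine Finset.sum_congr rfl fun i _ => Finset.sum_congr rfl fun k _ =>
            Finset.sum_congr rfl fun j _ => ?_
          rw [P.rhd_rhd ((ρ2 i).right j) (ρy.right k) z,
            subProd_repr_apply R H P.rhd _ _ (ρ22 i j)]
          simp [TensorProduct.sum_tmul, Finset.mul_sum]
      _ = ∑ k ∈ ρy.index, ∑ i ∈ ρx.index, ∑ j ∈ (ρ2 i).index, ∑ m ∈ (ρ22 i j).index,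
            ρx.left i * (P.rhd ((ρ2 i).left j ⊗ₜ ρy.left k)
              * P.rhd (((ρ22 i j).left m * P.rhd ((ρ22 i j).right m ⊗ₜ ρy.right k)) ⊗ₜ z)) :=
          Finset.sum_comm
  -- conversion through phi
  have hL2 : ∀ k : H × H, phi R H P.rhd (ρy.left k) (ρy.right k) z t₁
      = ∑ i ∈ ρx.index, ∑ l ∈ (ρ1 i).index, ∑ j ∈ (ρ2 i).index,
          (ρ1 i).left l * (P.rhd ((ρ2 i).left j ⊗ₜ ρy.left k)
            * P.rhd (((ρ1 i).right l * P.rhd ((ρ2 i).right j ⊗ₜ ρy.right k)) ⊗ₜ z)) := by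
    intro k
    rw [ht₁]
    simp only [map_sum]
    exact Finset.sum_congr rfl fun i _ => Finset.sum_congr rfl fun l _ =>
      Finset.sum_congr rfl fun j _ => phi_apply R H P.rhd _ _ _ _ _ _ _
  have hR2 : ∀ k : H × H, phi R H P.rhd (ρy.left k) (ρy.right k) z t₂
      = ∑ i ∈ ρx.index, ∑ j ∈ (ρ2 i).index, ∑ m ∈ (ρ22 i j).index,
          ρx.left i * (P.rhd ((ρ2 i).left j ⊗ₜ ρy.left k)
            * P.rhd (((ρ22 i j).left m * P.rhd ((ρ22 i j).right m ⊗ₜ ρy.right k)) ⊗ₜ z)) := by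
    intro k
    rw [ht₂]
    simp only [map_sum]
    exact Finset.sum_congr rfl fun i _ => Finset.sum_congr rfl fun j _ =>
      Finset.sum_congr rfl fun m _ => phi_apply R H P.rhd _ _ _ _ _ _ _
  rw [hLHS, hRHS]
  refine Finset.sum_congr rfl fun k _ => ?_
  rw [← hL2 k, ← hR2 k, key]
end

section
/- Let (H, ▷) be a cocommutative post-Hopf algebra. Then the comultiplication Δ is an algebra homomorphism with respect to the subadjacent product *▷, i.e., Δ(x *▷ y) = (x₁ *▷ y₁) ⊗ (x₂ *▷ y₂), where x *▷ y := x₁·(x₂ ▷ y). -/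
/-!
Post-Hopf algebras (Li–Sheng–Tang). We work over a commutative ring `R`.
`Coalgebra.comul (A := H ⊗[R] H)` refers to the standard coalgebra structure
on the tensor product, so that `comul_rhd`/`counit_rhd` say exactly that
`▷ : H ⊗ H → H` is a coalgebra homomorphism.  Sweedler sums such as
`(x₁ ▷ y)·(x₂ ▷ z)` are expressed by applying suitable linear maps to
`Coalgebra.comul x`.
-/

open TensorProduct Coalgebra LinearMap HopfAlgebra

set_option synthInstance.maxHeartbeats 1000000
set_option maxHeartbeats 1000000

variable (R H : Type*) [CommRing R] [Ring H] [HopfAlgebra R H]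

section AuxPostHopf

variable {R H : Type*} [CommRing R] [Ring H] [HopfAlgebra R H]

/-- `Δ⊗Δ∘Δ` written with the last comultiplication in the middle slot. -/
lemma aux_comul_comul_comul :
    TensorProduct.map (Coalgebra.comul (R := R) (A := H)) Coalgebra.comul ∘ₗ Coalgebra.comul
      = (TensorProduct.assoc R H H (H ⊗[R] H)).symm.toLinearMap
          ∘ₗ LinearMap.lTensor H (TensorProduct.assoc R H H H).toLinearMap
          ∘ₗ LinearMap.lTensor H (LinearMap.rTensor H (Coalgebra.comul (R := R) (A := H)))
          ∘ₗ LinearMap.lTensor H (Coalgebra.comul (R := R) (A := H))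
          ∘ₗ Coalgebra.comul := by
  have h1 : LinearMap.rTensor H (Coalgebra.comul (R := R) (A := H)) ∘ₗ Coalgebra.comul
      = (TensorProduct.assoc R H H H).symm.toLinearMap
          ∘ₗ LinearMap.lTensor H (Coalgebra.comul (R := R) (A := H)) ∘ₗ Coalgebra.comul := by
    exact (Coalgebra.coassoc_symm (R := R) (A := H)).symm
  have hnat : (TensorProduct.assoc R H H (H ⊗[R] H)).symm.toLinearMap
        ∘ₗ LinearMap.lTensor H (LinearMap.lTensor H (Coalgebra.comul (R := R) (A := H)))
      = LinearMap.lTensor (H ⊗[R] H) (Coalgebra.comul (R := R) (A := H))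
          ∘ₗ (TensorProduct.assoc R H H H).symm.toLinearMap := by
    ext a b c
    simp [TensorProduct.assoc_symm_tmul]
  have hcancel : LinearMap.lTensor H (TensorProduct.assoc R H H H).toLinearMap
        ∘ₗ LinearMap.lTensor H (TensorProduct.assoc R H H H).symm.toLinearMap
      = LinearMap.id := by
    rw [← LinearMap.lTensor_comp]
    convert LinearMap.lTensor_id H (H ⊗[R] (H ⊗[R] H)) using 2
    ext t
    simp
  apply LinearMap.ext; intro x
  simp only [LinearMap.comp_apply, LinearEquiv.coe_coe]
  rw [← LinearMap.comp_apply (LinearMap.lTensor H (LinearMap.rTensor H Coalgebra.comul))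
      (LinearMap.lTensor H Coalgebra.comul), ← LinearMap.lTensor_comp, h1,
    LinearMap.lTensor_comp, LinearMap.lTensor_comp]
  simp only [LinearMap.comp_apply]
  rw [← LinearMap.comp_apply (LinearMap.lTensor H (TensorProduct.assoc R H H H).toLinearMap)
      (LinearMap.lTensor H (TensorProduct.assoc R H H H).symm.toLinearMap), hcancel,
    LinearMap.id_apply]
  have hnat' := LinearMap.congr_fun hnat ((LinearMap.lTensor H Coalgebra.comul)
      ((Coalgebra.comul : H →ₗ[R] H ⊗[R] H) x))
  simp only [LinearMap.comp_apply, LinearEquiv.coe_coe] at hnat'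
  rw [hnat', Coalgebra.coassoc_symm_apply]
  have hlr := LinearMap.congr_fun
    (LinearMap.lTensor_comp_rTensor (f := (Coalgebra.comul : H →ₗ[R] H ⊗[R] H))
      (g := (Coalgebra.comul : H →ₗ[R] H ⊗[R] H))) ((Coalgebra.comul : H →ₗ[R] H ⊗[R] H) x)
  simp only [LinearMap.comp_apply] at hlr ⊢
  rw [← hlr]

/-- Structural compatibility of `tensorTensorTensorComm` with the rebracketing
`a ⊗ ((b ⊗ c) ⊗ d) ↦ (a ⊗ b) ⊗ (c ⊗ d)`: it swaps the middle pair. -/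
lemma aux_tttComm_rebracket :
    (TensorProduct.tensorTensorTensorComm R H H H H).toLinearMap
        ∘ₗ (TensorProduct.assoc R H H (H ⊗[R] H)).symm.toLinearMap
        ∘ₗ LinearMap.lTensor H (TensorProduct.assoc R H H H).toLinearMap
      = (TensorProduct.assoc R H H (H ⊗[R] H)).symm.toLinearMap
          ∘ₗ LinearMap.lTensor H (TensorProduct.assoc R H H H).toLinearMap
          ∘ₗ LinearMap.lTensor H
              (LinearMap.rTensor H (TensorProduct.comm R H H).toLinearMap) := by
  ext a b c d
  simp [TensorProduct.assoc_tmul, TensorProduct.assoc_symm_tmul,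
    TensorProduct.tensorTensorTensorComm_tmul, TensorProduct.comm_tmul]

/-- The key cocommutativity lemma: `Δ_{H⊗H} ∘ Δ = (Δ ⊗ Δ) ∘ Δ`. -/
lemma aux_key (hcop : _root_.IsCocomm R H) :
    (Coalgebra.comul (R := R) (A := H ⊗[R] H)) ∘ₗ (Coalgebra.comul (R := R) (A := H))
      = TensorProduct.map Coalgebra.comul Coalgebra.comul ∘ₗ Coalgebra.comul := by
  have hs : (TensorProduct.comm R H H).toLinearMap ∘ₗ (Coalgebra.comul : H →ₗ[R] H ⊗[R] H)
      = Coalgebra.comul := by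
    ext x
    simpa using hcop x
  apply LinearMap.ext; intro x
  have hA := LinearMap.congr_fun (aux_comul_comul_comul (R := R) (H := H)) x
  simp only [LinearMap.comp_apply, LinearEquiv.coe_coe,
    TensorProduct.comul_def, TensorProduct.AlgebraTensorModule.map_eq,
    TensorProduct.AlgebraTensorModule.tensorTensorTensorComm_eq] at hA ⊢
  rw [hA]
  have hB := LinearMap.congr_fun (aux_tttComm_rebracket (R := R) (H := H))
      ((LinearMap.lTensor H (LinearMap.rTensor H Coalgebra.comul))
        ((LinearMap.lTensor H (Coalgebra.comul : H →ₗ[R] H ⊗[R] H))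
          ((Coalgebra.comul : H →ₗ[R] H ⊗[R] H) x)))
  simp only [LinearMap.comp_apply, LinearEquiv.coe_coe] at hB
  rw [hB]
  congr 2
  rw [← LinearMap.comp_apply, ← LinearMap.lTensor_comp, ← LinearMap.rTensor_comp, hs]

/-- The auxiliary map `Θ(((a⊗b)⊗(c⊗d))⊗(u⊗v)) = (a·(b▷u)) ⊗ (c·(d▷v))`. -/
noncomputable def theta (rhd : H ⊗[R] H →ₗ[R] H) :
    ((H ⊗[R] H) ⊗[R] (H ⊗[R] H)) ⊗[R] (H ⊗[R] H) →ₗ[R] H ⊗[R] H :=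
  TensorProduct.map
      (LinearMap.mul' R H ∘ₗ TensorProduct.map LinearMap.id rhd)
      (LinearMap.mul' R H ∘ₗ TensorProduct.map LinearMap.id rhd)
    ∘ₗ TensorProduct.map (TensorProduct.assoc R H H H).toLinearMap
        (TensorProduct.assoc R H H H).toLinearMap
    ∘ₗ (TensorProduct.tensorTensorTensorComm R (H ⊗[R] H) (H ⊗[R] H) H H).toLinearMap

lemma aux_E (rhd : H ⊗[R] H →ₗ[R] H) (w₁ w₂ w₃ : H ⊗[R] H) :
    w₁ * TensorProduct.map rhd rhd (TensorProduct.tensorTensorTensorComm R H H H H (w₂ ⊗ₜ w₃))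
      = theta rhd ((TensorProduct.tensorTensorTensorComm R H H H H (w₁ ⊗ₜ w₂)) ⊗ₜ w₃) := by
  induction w₁ using TensorProduct.induction_on with
  | zero => simp only [TensorProduct.zero_tmul, map_zero, LinearMap.map_zero, zero_mul]
  | add a b ha hb => simp only [TensorProduct.add_tmul, map_add, add_mul, ha, hb]
  | tmul p₁ q₁ =>
    induction w₂ using TensorProduct.induction_on with
    | zero => simp only [TensorProduct.zero_tmul, TensorProduct.tmul_zero, map_zero,
        LinearMap.map_zero, mul_zero]
    | add a b ha hb => simp only [TensorProduct.add_tmul, TensorProduct.tmul_add, map_add,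
        mul_add, ha, hb]
    | tmul p₂ q₂ =>
      induction w₃ using TensorProduct.induction_on with
      | zero => simp only [TensorProduct.tmul_zero, map_zero, LinearMap.map_zero, mul_zero]
      | add a b ha hb => simp only [TensorProduct.tmul_add, map_add, mul_add, ha, hb]
      | tmul p₃ q₃ =>
        simp [theta, TensorProduct.tensorTensorTensorComm_tmul,
          Algebra.TensorProduct.tmul_mul_tmul]

lemma aux_C (rhd : H ⊗[R] H →ₗ[R] H) :
    TensorProduct.map (subProd R H rhd) (subProd R H rhd)
        ∘ₗ (TensorProduct.tensorTensorTensorComm R H H H H).toLinearMap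
      = theta rhd ∘ₗ LinearMap.rTensor (H ⊗[R] H)
          (TensorProduct.map (Coalgebra.comul (R := R) (A := H)) Coalgebra.comul) := by
  ext a b u v
  simp [subProd, theta, TensorProduct.tensorTensorTensorComm_tmul]

lemma aux_D (P : PostHopf R H) :
    (Coalgebra.comul (R := R) (A := H)) ∘ₗ (LinearMap.mul' R H
        ∘ₗ TensorProduct.map LinearMap.id P.rhd ∘ₗ (TensorProduct.assoc R H H H).toLinearMap)
      = theta P.rhd ∘ₗ TensorProduct.map (Coalgebra.comul (R := R) (A := H ⊗[R] H))
          (Coalgebra.comul (R := R) (A := H)) := by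
  ext a b y
  have hr := LinearMap.congr_fun P.comul_rhd (b ⊗ₜ[R] y)
  simp only [LinearMap.comp_apply, TensorProduct.comul_def,
    LinearEquiv.coe_coe, TensorProduct.map_tmul] at hr
  simp only [TensorProduct.AlgebraTensorModule.curry_apply, TensorProduct.curry_apply,
    LinearMap.coe_restrictScalars,
    LinearMap.compr₂_apply, TensorProduct.mk_apply, LinearMap.comp_apply,
    LinearEquiv.coe_coe, TensorProduct.assoc_tmul, TensorProduct.map_tmul,
    LinearMap.id_coe, id_eq, LinearMap.mul'_apply,
    TensorProduct.comul_def]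
  rw [Bialgebra.comul_mul, hr]
  exact aux_E P.rhd (Coalgebra.comul a) (Coalgebra.comul b) (Coalgebra.comul y)

end AuxPostHopf

/-- In a cocommutative post-Hopf algebra, the comultiplication is an algebra
homomorphism for the subadjacent product:
`Δ(x *▷ y) = (x₁ *▷ y₁) ⊗ (x₂ *▷ y₂)`. -/
theorem comul_subProd (P : PostHopf R H) (hcop : _root_.IsCocomm R H) :
    Coalgebra.comul ∘ₗ subProd R H P.rhd
      = TensorProduct.map (subProd R H P.rhd) (subProd R H P.rhd)
          ∘ₗ (Coalgebra.comul (R := R) (A := H ⊗[R] H)) := by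
  apply TensorProduct.ext'
  intro x y
  have hD := LinearMap.congr_fun (aux_D P) ((Coalgebra.comul x : H ⊗[R] H) ⊗ₜ[R] y)
  have hC := LinearMap.congr_fun (aux_C P.rhd)
      ((Coalgebra.comul x : H ⊗[R] H) ⊗ₜ[R] (Coalgebra.comul y : H ⊗[R] H))
  have hK := LinearMap.congr_fun (aux_key (R := R) (H := H) hcop) x
  simp only [LinearMap.comp_apply, LinearEquiv.coe_coe, TensorProduct.map_tmul,
    LinearMap.rTensor_tmul, LinearMap.id_coe, id_eq,
    TensorProduct.comul_def, TensorProduct.AlgebraTensorModule.map_eq,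
    TensorProduct.AlgebraTensorModule.tensorTensorTensorComm_eq] at hD hC hK ⊢
  rw [hC, ← hK, ← hD]
  simp [subProd]
end

section
/- Let (H, ▷) be a cocommutative post-Hopf algebra. Define S▷(x) := β_{x₁}(S(x₂)), where β is the convolution inverse of α_x(y) = x ▷ y. Then S▷ is an antipode for the bialgebra (H, *▷, 1, Δ, ε), i.e., x₁ *▷ S▷(x₂) = ε(x)1 = S▷(x₁) *▷ x₂, where x *▷ y := x₁·(x₂ ▷ y). -/
/-!
Post-Hopf algebras (Li–Sheng–Tang). We work over a commutative ring `R`.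
`Coalgebra.comul (A := H ⊗[R] H)` refers to the standard coalgebra structure
on the tensor product, so that `comul_rhd`/`counit_rhd` say exactly that
`▷ : H ⊗ H → H` is a coalgebra homomorphism.  Sweedler sums such as
`(x₁ ▷ y)·(x₂ ▷ z)` are expressed by applying suitable linear maps to
`Coalgebra.comul x`.
-/

open TensorProduct Coalgebra LinearMap HopfAlgebra

variable (R H : Type*) [CommRing R] [Ring H] [HopfAlgebra R H]

namespace PostHopfProof
variable {R H}

local notation "Δ" => (Coalgebra.comul (R := R) (A := H))
local notation "D3" => (TensorProduct.map LinearMap.id (Coalgebra.comul (R := R) (A := H))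
    ∘ₗ Coalgebra.comul)
local notation "E4" => (TensorProduct.map (Coalgebra.comul (R := R) (A := H))
    (Coalgebra.comul (R := R) (A := H)) ∘ₗ Coalgebra.comul)

section Modules
variable {P Q N X Y : Type*} [AddCommMonoid P] [AddCommMonoid Q] [AddCommMonoid N]
  [AddCommMonoid X] [AddCommMonoid Y]
  [Module R P] [Module R Q] [Module R N] [Module R X] [Module R Y]

/-- generalized convolution: `x ↦ b (f x₁) (g x₂)`. -/
noncomputable def convB (b : P →ₗ[R] Q →ₗ[R] N) (f : H →ₗ[R] P) (g : H →ₗ[R] Q) : H →ₗ[R] N :=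
  TensorProduct.lift b ∘ₗ TensorProduct.map f g ∘ₗ Coalgebra.comul

lemma lift_comp (b : P →ₗ[R] Q →ₗ[R] N) (h : X →ₗ[R] P) :
    TensorProduct.lift (b ∘ₗ h) = TensorProduct.lift b ∘ₗ TensorProduct.map h LinearMap.id := by
  apply TensorProduct.ext'; intros; simp

lemma lift_compl₂ (b : P →ₗ[R] Q →ₗ[R] N) (h : Y →ₗ[R] Q) :
    TensorProduct.lift (b.compl₂ h) = TensorProduct.lift b ∘ₗ TensorProduct.map LinearMap.id h := by
  apply TensorProduct.ext'; intros; simp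

lemma lift_compr₂ (b : P →ₗ[R] Q →ₗ[R] N) (h : N →ₗ[R] X) :
    TensorProduct.lift (b.compr₂ h) = h ∘ₗ TensorProduct.lift b := by
  apply TensorProduct.ext'; intros; simp


lemma map_comp_left (h : X →ₗ[R] P) (f : H →ₗ[R] X) (g : H →ₗ[R] Q) :
    TensorProduct.map h (LinearMap.id (M := Q)) ∘ₗ TensorProduct.map f g
      = TensorProduct.map (h ∘ₗ f) g := by
  rw [← TensorProduct.map_comp]; simp

lemma map_comp_right (h : Y →ₗ[R] Q) (f : H →ₗ[R] P) (g : H →ₗ[R] Y) :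
    TensorProduct.map (LinearMap.id (M := P)) h ∘ₗ TensorProduct.map f g
      = TensorProduct.map f (h ∘ₗ g) := by
  rw [← TensorProduct.map_comp]; simp

lemma convB_comp_left (b : P →ₗ[R] Q →ₗ[R] N) (h : X →ₗ[R] P) (f : H →ₗ[R] X) (g : H →ₗ[R] Q) :
    convB (b ∘ₗ h) f g = convB b (h ∘ₗ f) g := by
  unfold convB
  rw [lift_comp]
  simp only [← LinearMap.comp_assoc]
  congr 1
  rw [LinearMap.comp_assoc, map_comp_left]

lemma convB_comp_right (b : P →ₗ[R] Q →ₗ[R] N) (h : Y →ₗ[R] Q) (f : H →ₗ[R] P) (g : H →ₗ[R] Y) :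
    convB (b.compl₂ h) f g = convB b f (h ∘ₗ g) := by
  unfold convB
  rw [lift_compl₂]
  simp only [← LinearMap.comp_assoc]
  congr 1
  rw [LinearMap.comp_assoc, map_comp_right]

lemma convB_compr₂ (b : P →ₗ[R] Q →ₗ[R] N) (h : N →ₗ[R] X) (f : H →ₗ[R] P) (g : H →ₗ[R] Q) :
    convB (b.compr₂ h) f g = h ∘ₗ convB b f g := by
  unfold convB
  rw [lift_compr₂]
  rfl

lemma convB_eq_left (b : P →ₗ[R] Q →ₗ[R] N) (f : H →ₗ[R] P) (g : H →ₗ[R] Q) :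
    convB b f g = TensorProduct.lift (b ∘ₗ f) ∘ₗ TensorProduct.map LinearMap.id g
      ∘ₗ Coalgebra.comul := by
  unfold convB
  rw [lift_comp]
  simp only [← LinearMap.comp_assoc]
  congr 1
  rw [LinearMap.comp_assoc, map_comp_left]
  simp

lemma convB_congr_left {X' : Type*} [AddCommMonoid X'] [Module R X']
    (b : P →ₗ[R] Q →ₗ[R] N) (b' : X' →ₗ[R] Q →ₗ[R] N) (f : H →ₗ[R] P) (f' : H →ₗ[R] X')
    (g : H →ₗ[R] Q) (hb : b ∘ₗ f = b' ∘ₗ f') :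
    convB b f g = convB b' f' g := by
  rw [convB_eq_left, convB_eq_left, hb]

/-- `x ↦ ε(x) • p`. -/
noncomputable def eps (p : P) : H →ₗ[R] P :=
  LinearMap.toSpanSingleton R P p ∘ₗ Coalgebra.counit

@[simp] lemma eps_apply (p : P) (x : H) :
    (eps (R := R) (H := H) p) x = Coalgebra.counit (R := R) x • p := rfl

lemma comp_eps (p : P) (h : P →ₗ[R] X) :
    h ∘ₗ (eps (R := R) (H := H) p) = eps (h p) := by
  ext x; simp

lemma convB_eps_left (b : P →ₗ[R] Q →ₗ[R] N) (p : P) (g : H →ₗ[R] Q) :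
    convB b (eps p) g = b p ∘ₗ g := by
  unfold convB eps
  have h1 : TensorProduct.map (LinearMap.toSpanSingleton R P p ∘ₗ Coalgebra.counit) g
      = TensorProduct.map (LinearMap.toSpanSingleton R P p) g ∘ₗ
        TensorProduct.map (Coalgebra.counit (R := R) (A := H)) LinearMap.id := by
    rw [← TensorProduct.map_comp]; simp
  have h2 : TensorProduct.map (Coalgebra.counit (R := R) (A := H)) (LinearMap.id (M := H))
      ∘ₗ Coalgebra.comul = TensorProduct.mk R R H 1 := by
    rw [show TensorProduct.map (Coalgebra.counit (R := R) (A := H)) (LinearMap.id (M := H))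
        = (Coalgebra.counit (R := R) (A := H)).rTensor H from rfl]
    exact Coalgebra.rTensor_counit_comp_comul
  rw [h1, LinearMap.comp_assoc, h2]
  ext x; simp

lemma convB_eps_right (b : P →ₗ[R] Q →ₗ[R] N) (q : Q) (f : H →ₗ[R] P) :
    convB b f (eps q) = b.flip q ∘ₗ f := by
  unfold convB eps
  have h1 : TensorProduct.map f (LinearMap.toSpanSingleton R Q q ∘ₗ Coalgebra.counit)
      = TensorProduct.map f (LinearMap.toSpanSingleton R Q q) ∘ₗ
        TensorProduct.map LinearMap.id (Coalgebra.counit (R := R) (A := H)) := by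
    rw [← TensorProduct.map_comp]; simp
  have h2 : TensorProduct.map (LinearMap.id (M := H)) (Coalgebra.counit (R := R) (A := H))
      ∘ₗ Coalgebra.comul = (TensorProduct.mk R H R).flip 1 := by
    rw [show TensorProduct.map (LinearMap.id (M := H)) (Coalgebra.counit (R := R) (A := H))
        = (Coalgebra.counit (R := R) (A := H)).lTensor H from rfl]
    exact Coalgebra.lTensor_counit_comp_comul
  rw [h1, LinearMap.comp_assoc, h2]
  ext x; simp

end Modules

section Coassoc

lemma coe_assoc_symm_assoc {A B C : Type*} [AddCommMonoid A] [AddCommMonoid B] [AddCommMonoid C]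
    [Module R A] [Module R B] [Module R C] :
    (TensorProduct.assoc R A B C).toLinearMap ∘ₗ (TensorProduct.assoc R A B C).symm.toLinearMap
      = LinearMap.id := by
  apply TensorProduct.ext'
  intros x y
  simp

lemma coe_symm_assoc_assoc {A B C : Type*} [AddCommMonoid A] [AddCommMonoid B] [AddCommMonoid C]
    [Module R A] [Module R B] [Module R C] :
    (TensorProduct.assoc R A B C).symm.toLinearMap ∘ₗ (TensorProduct.assoc R A B C).toLinearMap
      = LinearMap.id := by
  apply TensorProduct.ext_threefold
  intros x y z
  simp


lemma comul_comul_left :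
    TensorProduct.map Δ (LinearMap.id (M := H)) ∘ₗ Δ
      = (TensorProduct.assoc R H H H).symm.toLinearMap ∘ₗ D3 := by
  have h := Coalgebra.coassoc_symm (R := R) (A := H)
  rw [show TensorProduct.map Δ (LinearMap.id (M := H))
      = (Coalgebra.comul (R := R) (A := H)).rTensor H from rfl]
  rw [show TensorProduct.map (LinearMap.id (M := H)) Δ
      = (Coalgebra.comul (R := R) (A := H)).lTensor H from rfl]
  rw [← h]

lemma assoc_comul_left :
    (TensorProduct.assoc R H H H).toLinearMap
      ∘ₗ TensorProduct.map Δ (LinearMap.id (M := H)) ∘ₗ Δ = D3 := by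
  rw [comul_comul_left, ← LinearMap.comp_assoc, coe_assoc_symm_assoc]
  simp

/-- `assoc ∘ (Δ ⊗ u) ∘ Δ = (id ⊗ id ⊗ u) ∘ D3`. -/
lemma assoc_map_comul {W : Type*} [AddCommMonoid W] [Module R W] (u : H →ₗ[R] W) :
    (TensorProduct.assoc R H H W).toLinearMap ∘ₗ TensorProduct.map Δ u ∘ₗ Δ
      = TensorProduct.map LinearMap.id (TensorProduct.map LinearMap.id u) ∘ₗ D3 := by
  have h1 : TensorProduct.map Δ u
      = TensorProduct.map (LinearMap.id (M := H ⊗[R] H)) u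
        ∘ₗ TensorProduct.map Δ (LinearMap.id (M := H)) := by
    rw [← TensorProduct.map_comp]; simp
  have h2 : TensorProduct.map (LinearMap.id (M := H)) (TensorProduct.map LinearMap.id u)
        ∘ₗ (TensorProduct.assoc R H H H).toLinearMap
      = (TensorProduct.assoc R H H W).toLinearMap
        ∘ₗ TensorProduct.map (LinearMap.id (M := H ⊗[R] H)) u := by
    have := TensorProduct.map_map_comp_assoc_eq (R := R) (LinearMap.id (M := H))
      (LinearMap.id (M := H)) u
    simpa using this
  rw [h1]
  calc (TensorProduct.assoc R H H W).toLinearMap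
        ∘ₗ (TensorProduct.map (LinearMap.id (M := H ⊗[R] H)) u
          ∘ₗ TensorProduct.map Δ (LinearMap.id (M := H))) ∘ₗ Δ
      = ((TensorProduct.assoc R H H W).toLinearMap
          ∘ₗ TensorProduct.map (LinearMap.id (M := H ⊗[R] H)) u)
          ∘ₗ (TensorProduct.map Δ (LinearMap.id (M := H)) ∘ₗ Δ) := by
        simp only [LinearMap.comp_assoc]
    _ = (TensorProduct.map LinearMap.id (TensorProduct.map LinearMap.id u)
          ∘ₗ (TensorProduct.assoc R H H H).toLinearMap)
          ∘ₗ (TensorProduct.map Δ (LinearMap.id (M := H)) ∘ₗ Δ) := by rw [h2]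
    _ = TensorProduct.map LinearMap.id (TensorProduct.map LinearMap.id u)
          ∘ₗ ((TensorProduct.assoc R H H H).toLinearMap
            ∘ₗ TensorProduct.map Δ (LinearMap.id (M := H)) ∘ₗ Δ) := by
        simp only [LinearMap.comp_assoc]
    _ = TensorProduct.map LinearMap.id (TensorProduct.map LinearMap.id u) ∘ₗ D3 := by
        rw [assoc_comul_left]

lemma comm_comul (hcop : ∀ x : H, (TensorProduct.comm R H H) (Coalgebra.comul x)
      = Coalgebra.comul x) :
    (TensorProduct.comm R H H).toLinearMap ∘ₗ Δ = Δ :=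
  LinearMap.ext fun x => hcop x

/-- swap of the first two legs of `D3` (cocommutativity + coassociativity). -/
lemma leftComm_D3 (hcop : ∀ x : H, (TensorProduct.comm R H H) (Coalgebra.comul x)
      = Coalgebra.comul x) :
    (TensorProduct.leftComm R H H H).toLinearMap ∘ₗ D3 = D3 := by
  have hassoc : (TensorProduct.leftComm R H H H).toLinearMap
        ∘ₗ (TensorProduct.assoc R H H H).toLinearMap
      = (TensorProduct.assoc R H H H).toLinearMap
        ∘ₗ TensorProduct.map (TensorProduct.comm R H H).toLinearMap LinearMap.id := by
    apply TensorProduct.ext_threefold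
    intro x y z
    simp [TensorProduct.leftComm]
  conv_lhs => rw [← assoc_comul_left]
  calc (TensorProduct.leftComm R H H H).toLinearMap
        ∘ₗ (TensorProduct.assoc R H H H).toLinearMap
        ∘ₗ TensorProduct.map Δ (LinearMap.id (M := H)) ∘ₗ Δ
      = ((TensorProduct.leftComm R H H H).toLinearMap
          ∘ₗ (TensorProduct.assoc R H H H).toLinearMap)
        ∘ₗ TensorProduct.map Δ (LinearMap.id (M := H)) ∘ₗ Δ := by
        simp only [LinearMap.comp_assoc]
    _ = (TensorProduct.assoc R H H H).toLinearMap
        ∘ₗ (TensorProduct.map (TensorProduct.comm R H H).toLinearMap LinearMap.id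
          ∘ₗ TensorProduct.map Δ (LinearMap.id (M := H))) ∘ₗ Δ := by
        rw [hassoc]; simp only [LinearMap.comp_assoc]
    _ = (TensorProduct.assoc R H H H).toLinearMap
        ∘ₗ TensorProduct.map ((TensorProduct.comm R H H).toLinearMap ∘ₗ Δ) LinearMap.id ∘ₗ Δ := by
        rw [map_comp_left]
    _ = D3 := by rw [comm_comul hcop, assoc_comul_left]


/-- the middle-swap of the 4-fold comultiplication is itself (cocommutative case). -/
lemma ttc_E4 (hcop : ∀ x : H, (TensorProduct.comm R H H) (Coalgebra.comul x)
      = Coalgebra.comul x) :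
    (TensorProduct.tensorTensorTensorComm R H H H H).toLinearMap ∘ₗ E4 = E4 := by
  have hE4 : (TensorProduct.assoc R H H (H ⊗[R] H)).toLinearMap ∘ₗ E4
      = TensorProduct.map LinearMap.id (D3) ∘ₗ Δ := by
    rw [assoc_map_comul (u := Δ), ← LinearMap.comp_assoc, map_comp_right]
  have hdec : (TensorProduct.tensorTensorTensorComm R H H H H).toLinearMap
      = (TensorProduct.assoc R H H (H ⊗[R] H)).symm.toLinearMap
        ∘ₗ TensorProduct.map LinearMap.id (TensorProduct.leftComm R H H H).toLinearMap
        ∘ₗ (TensorProduct.assoc R H H (H ⊗[R] H)).toLinearMap := by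
    apply TensorProduct.ext
    apply TensorProduct.ext
    ext x y z w
    simp [TensorProduct.tensorTensorTensorComm, TensorProduct.leftComm,
      TensorProduct.tensorTensorTensorAssoc]
  have hswap : TensorProduct.map LinearMap.id (TensorProduct.leftComm R H H H).toLinearMap
      ∘ₗ (TensorProduct.map LinearMap.id (D3) ∘ₗ Δ)
      = TensorProduct.map LinearMap.id (D3) ∘ₗ Δ := by
    rw [← LinearMap.comp_assoc, map_comp_right, leftComm_D3 hcop]
  calc (TensorProduct.tensorTensorTensorComm R H H H H).toLinearMap ∘ₗ E4
      = (TensorProduct.assoc R H H (H ⊗[R] H)).symm.toLinearMap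
        ∘ₗ TensorProduct.map LinearMap.id (TensorProduct.leftComm R H H H).toLinearMap
        ∘ₗ ((TensorProduct.assoc R H H (H ⊗[R] H)).toLinearMap ∘ₗ E4) := by
        rw [hdec]; simp only [LinearMap.comp_assoc]
    _ = (TensorProduct.assoc R H H (H ⊗[R] H)).symm.toLinearMap
        ∘ₗ (TensorProduct.map LinearMap.id (D3) ∘ₗ Δ) := by rw [hE4, hswap]
    _ = (TensorProduct.assoc R H H (H ⊗[R] H)).symm.toLinearMap
        ∘ₗ ((TensorProduct.assoc R H H (H ⊗[R] H)).toLinearMap ∘ₗ E4) := by rw [hE4]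
    _ = E4 := by rw [← LinearMap.comp_assoc, coe_symm_assoc_assoc]; simp


end Coassoc

section ConvAssoc
variable {P Q S N N' Q' : Type*} [AddCommMonoid P] [AddCommMonoid Q] [AddCommMonoid S]
  [AddCommMonoid N] [AddCommMonoid N'] [AddCommMonoid Q']
  [Module R P] [Module R Q] [Module R S] [Module R N] [Module R N'] [Module R Q']


/-- generalized associativity of convolution. -/
lemma convB_assoc (b₁ : P →ₗ[R] Q' →ₗ[R] N) (b₂ : Q →ₗ[R] S →ₗ[R] Q')
    (b₃ : N' →ₗ[R] S →ₗ[R] N) (b₄ : P →ₗ[R] Q →ₗ[R] N')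
    (hcompat : ∀ p q s, b₁ p (b₂ q s) = b₃ (b₄ p q) s)
    (f : H →ₗ[R] P) (g : H →ₗ[R] Q) (h : H →ₗ[R] S) :
    convB b₃ (convB b₄ f g) h = convB b₁ f (convB b₂ g h) := by
  unfold convB
  have hL1 : TensorProduct.map
        (TensorProduct.lift b₄ ∘ₗ TensorProduct.map f g ∘ₗ Coalgebra.comul) h
      = TensorProduct.map (TensorProduct.lift b₄ ∘ₗ TensorProduct.map f g) h
        ∘ₗ TensorProduct.map Δ (LinearMap.id (M := H)) := by
    rw [← TensorProduct.map_comp]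
    simp only [LinearMap.comp_id, LinearMap.comp_assoc]
  have hR1 : TensorProduct.map f
        (TensorProduct.lift b₂ ∘ₗ TensorProduct.map g h ∘ₗ Coalgebra.comul)
      = TensorProduct.map (LinearMap.id (M := P)) (TensorProduct.lift b₂
          ∘ₗ TensorProduct.map g h)
        ∘ₗ TensorProduct.map f (LinearMap.id (M := H ⊗[R] H))
        ∘ₗ TensorProduct.map (LinearMap.id (M := H)) Δ := by
    rw [← TensorProduct.map_comp, ← TensorProduct.map_comp]
    simp only [LinearMap.comp_id, LinearMap.id_comp, LinearMap.comp_assoc]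
  have hkey : (TensorProduct.lift b₃
        ∘ₗ TensorProduct.map (TensorProduct.lift b₄ ∘ₗ TensorProduct.map f g) h)
        ∘ₗ (TensorProduct.assoc R H H H).symm.toLinearMap
      = TensorProduct.lift b₁
          ∘ₗ TensorProduct.map (LinearMap.id (M := P))
              (TensorProduct.lift b₂ ∘ₗ TensorProduct.map g h)
          ∘ₗ TensorProduct.map f (LinearMap.id (M := H ⊗[R] H)) := by
    apply TensorProduct.ext
    ext x y z
    simp [hcompat]
  calc TensorProduct.lift b₃
        ∘ₗ TensorProduct.map (TensorProduct.lift b₄ ∘ₗ TensorProduct.map f g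
            ∘ₗ Coalgebra.comul) h ∘ₗ Coalgebra.comul
      = (TensorProduct.lift b₃
          ∘ₗ TensorProduct.map (TensorProduct.lift b₄ ∘ₗ TensorProduct.map f g) h)
          ∘ₗ (TensorProduct.map Δ (LinearMap.id (M := H)) ∘ₗ Coalgebra.comul) := by
        rw [hL1]; simp only [LinearMap.comp_assoc]
    _ = (TensorProduct.lift b₃
          ∘ₗ TensorProduct.map (TensorProduct.lift b₄ ∘ₗ TensorProduct.map f g) h)
          ∘ₗ ((TensorProduct.assoc R H H H).symm.toLinearMap ∘ₗ D3) := by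
        rw [comul_comul_left]
    _ = ((TensorProduct.lift b₃
          ∘ₗ TensorProduct.map (TensorProduct.lift b₄ ∘ₗ TensorProduct.map f g) h)
          ∘ₗ (TensorProduct.assoc R H H H).symm.toLinearMap) ∘ₗ D3 := by
        simp only [LinearMap.comp_assoc]
    _ = (TensorProduct.lift b₁
          ∘ₗ TensorProduct.map (LinearMap.id (M := P))
              (TensorProduct.lift b₂ ∘ₗ TensorProduct.map g h)
          ∘ₗ TensorProduct.map f (LinearMap.id (M := H ⊗[R] H))) ∘ₗ D3 := by rw [hkey]
    _ = TensorProduct.lift b₁ ∘ₗ TensorProduct.map f (TensorProduct.lift b₂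
          ∘ₗ TensorProduct.map g h ∘ₗ Coalgebra.comul) ∘ₗ Coalgebra.comul := by
        rw [hR1]; simp only [LinearMap.comp_assoc]

end ConvAssoc

section Alg
variable {A : Type*} [Ring A] [Algebra R A]

lemma lift_mul_tmul (a b : A) :
    TensorProduct.lift (LinearMap.mul R A) (a ⊗ₜ[R] b) = a * b := rfl

lemma cv_assoc (f g h : H →ₗ[R] A) :
    convB (LinearMap.mul R A) (convB (LinearMap.mul R A) f g) h
      = convB (LinearMap.mul R A) f (convB (LinearMap.mul R A) g h) :=
  convB_assoc _ _ _ _ (fun p q s => (mul_assoc p q s).symm) f g h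

lemma cv_one_left (g : H →ₗ[R] A) : convB (LinearMap.mul R A) (eps 1) g = g := by
  rw [convB_eps_left]
  have : (LinearMap.mul R A) 1 = LinearMap.id := by ext a; simp
  rw [this]; simp

lemma cv_one_right (f : H →ₗ[R] A) : convB (LinearMap.mul R A) f (eps 1) = f := by
  rw [convB_eps_right]
  have : (LinearMap.mul R A).flip 1 = LinearMap.id := by ext a; simp
  rw [this]; simp

lemma algLinearMap_counit :
    (Algebra.linearMap R A) ∘ₗ (Coalgebra.counit : H →ₗ[R] R) = eps 1 := by
  ext x; simp [Algebra.algebraMap_eq_smul_one]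

end Alg

lemma convEnd_eq (f g : H →ₗ[R] Module.End R H) :
    convEnd R H f g = convB (LinearMap.mul R (Module.End R H)) f g := rfl

lemma convUnit_eq : convUnit R H = eps (1 : Module.End R H) :=
  algLinearMap_counit

lemma cv_id_antipode :
    convB (LinearMap.mul R H) LinearMap.id (HopfAlgebra.antipode (R := R) (A := H))
      = eps (1 : H) := by
  unfold convB
  rw [show TensorProduct.map (LinearMap.id (M := H)) (HopfAlgebra.antipode (R := R) (A := H))
      = (HopfAlgebra.antipode (R := R) (A := H)).lTensor H from rfl]
  rw [show TensorProduct.lift (LinearMap.mul R H) = LinearMap.mul' R H from rfl]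
  rw [HopfAlgebra.mul_antipode_lTensor_comul]
  exact algLinearMap_counit

lemma cv_antipode_id :
    convB (LinearMap.mul R H) (HopfAlgebra.antipode (R := R) (A := H)) LinearMap.id
      = eps (1 : H) := by
  unfold convB
  rw [show TensorProduct.map (HopfAlgebra.antipode (R := R) (A := H)) (LinearMap.id (M := H))
      = (HopfAlgebra.antipode (R := R) (A := H)).rTensor H from rfl]
  rw [show TensorProduct.lift (LinearMap.mul R H) = LinearMap.mul' R H from rfl]
  rw [HopfAlgebra.mul_antipode_rTensor_comul]
  exact algLinearMap_counit

section ComulAntipode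

local notation "S" => (HopfAlgebra.antipode (R := R) (A := H))

lemma comul_mul'_map :
    TensorProduct.lift (LinearMap.mul R (H ⊗[R] H))
        ∘ₗ TensorProduct.map (Coalgebra.comul (R := R) (A := H)) Δ
      = Δ ∘ₗ TensorProduct.lift (LinearMap.mul R H) := by
  apply TensorProduct.ext'
  intro a b
  simp [lift_mul_tmul]

lemma comul_eps_one : (Coalgebra.comul (R := R) (A := H)) ∘ₗ eps (R := R) (H := H) (1 : H)
    = eps (1 : H ⊗[R] H) := by
  rw [comp_eps]
  congr 1
  simp

lemma cv_mul_map_assoc {u v : H →ₗ[R] H} :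
    convB (LinearMap.mul R (H ⊗[R] H)) ((TensorProduct.map u v) ∘ₗ Δ) Δ
      = (TensorProduct.lift (LinearMap.mul R (H ⊗[R] H))
          ∘ₗ TensorProduct.map (TensorProduct.map u v) (LinearMap.id (M := H ⊗[R] H)))
        ∘ₗ E4 := by
  unfold convB
  have hm : TensorProduct.map (TensorProduct.map u v ∘ₗ Δ) Δ
      = TensorProduct.map (TensorProduct.map u v) (LinearMap.id (M := H ⊗[R] H))
        ∘ₗ TensorProduct.map Δ Δ := by
    rw [← TensorProduct.map_comp]; simp
  rw [hm]
  simp only [LinearMap.comp_assoc]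

lemma cv_comul_comul_antipode :
    convB (LinearMap.mul R (H ⊗[R] H)) Δ ((Coalgebra.comul (R := R) (A := H)) ∘ₗ S)
      = eps (1 : H ⊗[R] H) := by
  have hm : TensorProduct.map Δ ((Coalgebra.comul (R := R) (A := H)) ∘ₗ S)
      = TensorProduct.map (Coalgebra.comul (R := R) (A := H)) Δ
        ∘ₗ TensorProduct.map LinearMap.id S := by
    rw [← TensorProduct.map_comp]; simp
  have h1 : convB (LinearMap.mul R (H ⊗[R] H)) Δ ((Coalgebra.comul (R := R) (A := H)) ∘ₗ S)
      = Δ ∘ₗ convB (LinearMap.mul R H) LinearMap.id S := by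
    unfold convB
    rw [hm]
    calc TensorProduct.lift (LinearMap.mul R (H ⊗[R] H))
          ∘ₗ (TensorProduct.map (Coalgebra.comul (R := R) (A := H)) Δ
            ∘ₗ TensorProduct.map LinearMap.id S) ∘ₗ Δ
        = (TensorProduct.lift (LinearMap.mul R (H ⊗[R] H))
            ∘ₗ TensorProduct.map (Coalgebra.comul (R := R) (A := H)) Δ)
          ∘ₗ TensorProduct.map LinearMap.id S ∘ₗ Δ := by simp only [LinearMap.comp_assoc]
      _ = (Δ ∘ₗ TensorProduct.lift (LinearMap.mul R H))
          ∘ₗ TensorProduct.map LinearMap.id S ∘ₗ Δ := by rw [comul_mul'_map]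
      _ = Δ ∘ₗ TensorProduct.lift (LinearMap.mul R H)
          ∘ₗ TensorProduct.map LinearMap.id S ∘ₗ Δ := by simp only [LinearMap.comp_assoc]
  rw [h1]
  rw [cv_id_antipode]
  exact comul_eps_one

lemma cv_comul_antipode_comul :
    convB (LinearMap.mul R (H ⊗[R] H)) ((Coalgebra.comul (R := R) (A := H)) ∘ₗ S) Δ
      = eps (1 : H ⊗[R] H) := by
  have hm : TensorProduct.map ((Coalgebra.comul (R := R) (A := H)) ∘ₗ S) Δ
      = TensorProduct.map (Coalgebra.comul (R := R) (A := H)) Δ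
        ∘ₗ TensorProduct.map S LinearMap.id := by
    rw [← TensorProduct.map_comp]; simp
  have h1 : convB (LinearMap.mul R (H ⊗[R] H)) ((Coalgebra.comul (R := R) (A := H)) ∘ₗ S) Δ
      = Δ ∘ₗ convB (LinearMap.mul R H) S LinearMap.id := by
    unfold convB
    rw [hm]
    calc TensorProduct.lift (LinearMap.mul R (H ⊗[R] H))
          ∘ₗ (TensorProduct.map (Coalgebra.comul (R := R) (A := H)) Δ
            ∘ₗ TensorProduct.map S LinearMap.id) ∘ₗ Δ
        = (TensorProduct.lift (LinearMap.mul R (H ⊗[R] H))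
            ∘ₗ TensorProduct.map (Coalgebra.comul (R := R) (A := H)) Δ)
          ∘ₗ TensorProduct.map S LinearMap.id ∘ₗ Δ := by simp only [LinearMap.comp_assoc]
      _ = (Δ ∘ₗ TensorProduct.lift (LinearMap.mul R H))
          ∘ₗ TensorProduct.map S LinearMap.id ∘ₗ Δ := by rw [comul_mul'_map]
      _ = Δ ∘ₗ TensorProduct.lift (LinearMap.mul R H)
          ∘ₗ TensorProduct.map S LinearMap.id ∘ₗ Δ := by simp only [LinearMap.comp_assoc]
  rw [h1]
  rw [cv_antipode_id]
  exact comul_eps_one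

lemma map_eps_one_eps_one :
    TensorProduct.map (eps (R := R) (H := H) (1 : H)) (eps (R := R) (H := H) (1 : H)) ∘ₗ Δ
      = eps (1 : H ⊗[R] H) := by
  have hsplit : TensorProduct.map (eps (R := R) (H := H) (1 : H)) (eps (R := R) (H := H) (1 : H))
      = TensorProduct.map (eps (R := R) (H := H) (1 : H)) (LinearMap.toSpanSingleton R H 1)
        ∘ₗ TensorProduct.map (LinearMap.id (M := H)) (Coalgebra.counit (R := R) (A := H)) := by
    rw [← TensorProduct.map_comp]
    simp [eps]
  have h2 : TensorProduct.map (LinearMap.id (M := H)) (Coalgebra.counit (R := R) (A := H))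
      ∘ₗ Δ = (TensorProduct.mk R H R).flip 1 := by
    rw [show TensorProduct.map (LinearMap.id (M := H)) (Coalgebra.counit (R := R) (A := H))
        = (Coalgebra.counit (R := R) (A := H)).lTensor H from rfl]
    exact Coalgebra.lTensor_counit_comp_comul
  rw [hsplit, LinearMap.comp_assoc, h2]
  ext x
  simp [Algebra.TensorProduct.one_def, TensorProduct.smul_tmul, TensorProduct.tmul_smul,
    smul_smul, mul_comm]

lemma cv_mapSS_comul
    (hcop : ∀ x : H, (TensorProduct.comm R H H) (Coalgebra.comul x) = Coalgebra.comul x) :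
    convB (LinearMap.mul R (H ⊗[R] H)) (TensorProduct.map S S ∘ₗ Δ) Δ
      = eps (1 : H ⊗[R] H) := by
  have hKΔ : TensorProduct.lift (LinearMap.mul R H)
      ∘ₗ TensorProduct.map S LinearMap.id ∘ₗ Δ = eps (1 : H) := cv_antipode_id
  have hZ : TensorProduct.lift (LinearMap.mul R (H ⊗[R] H))
        ∘ₗ TensorProduct.map (TensorProduct.map S S) (LinearMap.id (M := H ⊗[R] H))
      = TensorProduct.map (TensorProduct.lift (LinearMap.mul R H)
            ∘ₗ TensorProduct.map S LinearMap.id)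
          (TensorProduct.lift (LinearMap.mul R H) ∘ₗ TensorProduct.map S LinearMap.id)
        ∘ₗ (TensorProduct.tensorTensorTensorComm R H H H H).toLinearMap := by
    apply TensorProduct.ext
    apply TensorProduct.ext
    ext a b c d
    simp [lift_mul_tmul, Algebra.TensorProduct.tmul_mul_tmul]
  rw [cv_mul_map_assoc, hZ]
  calc (TensorProduct.map (TensorProduct.lift (LinearMap.mul R H)
            ∘ₗ TensorProduct.map S LinearMap.id)
          (TensorProduct.lift (LinearMap.mul R H) ∘ₗ TensorProduct.map S LinearMap.id)
        ∘ₗ (TensorProduct.tensorTensorTensorComm R H H H H).toLinearMap) ∘ₗ E4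
      = TensorProduct.map (TensorProduct.lift (LinearMap.mul R H)
            ∘ₗ TensorProduct.map S LinearMap.id)
          (TensorProduct.lift (LinearMap.mul R H) ∘ₗ TensorProduct.map S LinearMap.id)
        ∘ₗ ((TensorProduct.tensorTensorTensorComm R H H H H).toLinearMap ∘ₗ E4) := by
        simp only [LinearMap.comp_assoc]
    _ = TensorProduct.map (TensorProduct.lift (LinearMap.mul R H)
            ∘ₗ TensorProduct.map S LinearMap.id)
          (TensorProduct.lift (LinearMap.mul R H) ∘ₗ TensorProduct.map S LinearMap.id)
        ∘ₗ E4 := by rw [ttc_E4 hcop]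
    _ = TensorProduct.map ((TensorProduct.lift (LinearMap.mul R H)
            ∘ₗ TensorProduct.map S LinearMap.id) ∘ₗ Δ)
          ((TensorProduct.lift (LinearMap.mul R H) ∘ₗ TensorProduct.map S LinearMap.id) ∘ₗ Δ)
        ∘ₗ Δ := by
        rw [← LinearMap.comp_assoc, ← TensorProduct.map_comp]
    _ = eps (1 : H ⊗[R] H) := by
        simp only [LinearMap.comp_assoc]
        rw [hKΔ, map_eps_one_eps_one]

lemma comul_antipode
    (hcop : ∀ x : H, (TensorProduct.comm R H H) (Coalgebra.comul x) = Coalgebra.comul x) :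
    (Coalgebra.comul (R := R) (A := H)) ∘ₗ S = TensorProduct.map S S ∘ₗ Δ := by
  have h1 := cv_comul_comul_antipode (R := R) (H := H)
  have h2 := cv_mapSS_comul (R := R) (H := H) hcop
  calc (Coalgebra.comul (R := R) (A := H)) ∘ₗ S
      = convB (LinearMap.mul R (H ⊗[R] H)) (eps 1)
          ((Coalgebra.comul (R := R) (A := H)) ∘ₗ S) := by rw [cv_one_left]
    _ = convB (LinearMap.mul R (H ⊗[R] H))
          (convB (LinearMap.mul R (H ⊗[R] H)) (TensorProduct.map S S ∘ₗ Δ) Δ)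
          ((Coalgebra.comul (R := R) (A := H)) ∘ₗ S) := by rw [h2]
    _ = convB (LinearMap.mul R (H ⊗[R] H)) (TensorProduct.map S S ∘ₗ Δ)
          (convB (LinearMap.mul R (H ⊗[R] H)) Δ
            ((Coalgebra.comul (R := R) (A := H)) ∘ₗ S)) := by rw [cv_assoc]
    _ = TensorProduct.map S S ∘ₗ Δ := by rw [h1, cv_one_right]

end ComulAntipode

section PostHopfPart
variable (Ph : PostHopf R H)

/-- `α : x ↦ (x ▷ ·)`. -/
noncomputable def αm : H →ₗ[R] Module.End R H := (TensorProduct.mk R H H).compr₂ Ph.rhd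

lemma lift_αm : TensorProduct.lift (αm Ph) = Ph.rhd := by
  apply TensorProduct.ext'
  intros; rfl

/-- `c : x ↦ x ▷ 1`. -/
noncomputable def cOne : H →ₗ[R] H := Ph.rhd ∘ₗ (TensorProduct.mk R H H).flip 1

lemma c_idem : convB (LinearMap.mul R H) (cOne Ph) (cOne Ph) = cOne Ph := by
  apply LinearMap.ext; intro x
  have h := Ph.rhd_mul x 1 1
  rw [one_mul] at h
  exact h.symm

lemma counit_c : (Coalgebra.counit (R := R) (A := H)) ∘ₗ cOne Ph = Coalgebra.counit := by
  apply LinearMap.ext; intro x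
  have h := LinearMap.congr_fun Ph.counit_rhd (x ⊗ₜ[R] (1 : H))
  simp only [LinearMap.comp_apply] at h ⊢
  rw [show (cOne Ph) x = Ph.rhd (x ⊗ₜ[R] (1 : H)) from rfl, h]
  rw [TensorProduct.counit_def]
  simp

lemma comul_c : (Coalgebra.comul (R := R) (A := H)) ∘ₗ cOne Ph
    = TensorProduct.map (cOne Ph) (cOne Ph) ∘ₗ Δ := by
  have hstep : (Coalgebra.comul (R := R) (A := H ⊗[R] H)) ∘ₗ (TensorProduct.mk R H H).flip 1
      = TensorProduct.map ((TensorProduct.mk R H H).flip 1) ((TensorProduct.mk R H H).flip 1)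
        ∘ₗ Δ := by
    rw [TensorProduct.comul_def]
    have h1 : TensorProduct.map (Coalgebra.comul (R := R) (A := H)) Δ
        ∘ₗ (TensorProduct.mk R H H).flip 1
        = (TensorProduct.mk R (H ⊗[R] H) (H ⊗[R] H)).flip ((1 : H) ⊗ₜ[R] (1 : H)) ∘ₗ Δ := by
      apply LinearMap.ext; intro x
      simp [Algebra.TensorProduct.one_def]
    have h2 : (TensorProduct.tensorTensorTensorComm R H H H H).toLinearMap
        ∘ₗ (TensorProduct.mk R (H ⊗[R] H) (H ⊗[R] H)).flip ((1 : H) ⊗ₜ[R] (1 : H))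
        = TensorProduct.map ((TensorProduct.mk R H H).flip 1)
            ((TensorProduct.mk R H H).flip 1) := by
      apply TensorProduct.ext'
      intro a b
      simp
    calc ((TensorProduct.tensorTensorTensorComm R H H H H).toLinearMap
            ∘ₗ TensorProduct.map (Coalgebra.comul (R := R) (A := H)) Δ)
          ∘ₗ (TensorProduct.mk R H H).flip 1
        = (TensorProduct.tensorTensorTensorComm R H H H H).toLinearMap
          ∘ₗ (TensorProduct.map (Coalgebra.comul (R := R) (A := H)) Δ
            ∘ₗ (TensorProduct.mk R H H).flip 1) := by simp only [LinearMap.comp_assoc]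
      _ = ((TensorProduct.tensorTensorTensorComm R H H H H).toLinearMap
          ∘ₗ (TensorProduct.mk R (H ⊗[R] H) (H ⊗[R] H)).flip ((1 : H) ⊗ₜ[R] (1 : H))) ∘ₗ Δ := by
          rw [h1]; simp only [LinearMap.comp_assoc]
      _ = TensorProduct.map ((TensorProduct.mk R H H).flip 1)
            ((TensorProduct.mk R H H).flip 1) ∘ₗ Δ := by rw [h2]
  calc (Coalgebra.comul (R := R) (A := H)) ∘ₗ cOne Ph
      = ((Coalgebra.comul (R := R) (A := H)) ∘ₗ Ph.rhd) ∘ₗ (TensorProduct.mk R H H).flip 1 := by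
        unfold cOne; simp only [LinearMap.comp_assoc]
    _ = TensorProduct.map Ph.rhd Ph.rhd
        ∘ₗ ((Coalgebra.comul (R := R) (A := H ⊗[R] H)) ∘ₗ (TensorProduct.mk R H H).flip 1) := by
        rw [Ph.comul_rhd]; simp only [LinearMap.comp_assoc]
    _ = TensorProduct.map Ph.rhd Ph.rhd
        ∘ₗ TensorProduct.map ((TensorProduct.mk R H H).flip 1)
            ((TensorProduct.mk R H H).flip 1) ∘ₗ Δ := by rw [hstep]
    _ = TensorProduct.map (cOne Ph) (cOne Ph) ∘ₗ Δ := by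
        rw [← LinearMap.comp_assoc, ← TensorProduct.map_comp]
        rfl

lemma c_eq_eps : cOne Ph = eps (1 : H) := by
  have hinv : convB (LinearMap.mul R H) (cOne Ph)
      ((HopfAlgebra.antipode (R := R) (A := H)) ∘ₗ cOne Ph) = eps (1 : H) := by
    have hm : TensorProduct.map (cOne Ph) ((HopfAlgebra.antipode (R := R) (A := H)) ∘ₗ cOne Ph)
        = TensorProduct.map LinearMap.id (HopfAlgebra.antipode (R := R) (A := H))
          ∘ₗ TensorProduct.map (cOne Ph) (cOne Ph) := by
      rw [← TensorProduct.map_comp]; simp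
    unfold convB
    rw [hm]
    calc TensorProduct.lift (LinearMap.mul R H)
          ∘ₗ (TensorProduct.map LinearMap.id (HopfAlgebra.antipode (R := R) (A := H))
            ∘ₗ TensorProduct.map (cOne Ph) (cOne Ph)) ∘ₗ Δ
        = (TensorProduct.lift (LinearMap.mul R H)
            ∘ₗ TensorProduct.map LinearMap.id (HopfAlgebra.antipode (R := R) (A := H)))
          ∘ₗ (TensorProduct.map (cOne Ph) (cOne Ph) ∘ₗ Δ) := by
          simp only [LinearMap.comp_assoc]
      _ = (TensorProduct.lift (LinearMap.mul R H)
            ∘ₗ TensorProduct.map LinearMap.id (HopfAlgebra.antipode (R := R) (A := H)))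
          ∘ₗ ((Coalgebra.comul (R := R) (A := H)) ∘ₗ cOne Ph) := by rw [comul_c]
      _ = (TensorProduct.lift (LinearMap.mul R H)
            ∘ₗ TensorProduct.map LinearMap.id (HopfAlgebra.antipode (R := R) (A := H))
            ∘ₗ Δ) ∘ₗ cOne Ph := by simp only [LinearMap.comp_assoc]
      _ = eps (1 : H) ∘ₗ cOne Ph := by
          rw [show (TensorProduct.lift (LinearMap.mul R H)
            ∘ₗ TensorProduct.map LinearMap.id (HopfAlgebra.antipode (R := R) (A := H))
            ∘ₗ Δ) = eps (1 : H) from cv_id_antipode]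
      _ = eps (1 : H) := by
          unfold eps
          rw [LinearMap.comp_assoc, counit_c]
  calc cOne Ph = convB (LinearMap.mul R H) (cOne Ph) (eps 1) := by rw [cv_one_right]
    _ = convB (LinearMap.mul R H) (cOne Ph) (convB (LinearMap.mul R H) (cOne Ph)
        ((HopfAlgebra.antipode (R := R) (A := H)) ∘ₗ cOne Ph)) := by rw [hinv]
    _ = convB (LinearMap.mul R H) (convB (LinearMap.mul R H) (cOne Ph) (cOne Ph))
        ((HopfAlgebra.antipode (R := R) (A := H)) ∘ₗ cOne Ph) := by rw [cv_assoc]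
    _ = convB (LinearMap.mul R H) (cOne Ph)
        ((HopfAlgebra.antipode (R := R) (A := H)) ∘ₗ cOne Ph) := by rw [c_idem]
    _ = eps (1 : H) := hinv

lemma rhd_one_one : Ph.rhd ((1 : H) ⊗ₜ[R] (1 : H)) = 1 := by
  have := LinearMap.congr_fun (c_eq_eps Ph) 1
  simpa [cOne] using this

lemma subProd_one_one : subProd R H Ph.rhd ((1 : H) ⊗ₜ[R] (1 : H)) = 1 := by
  unfold subProd
  simp [Bialgebra.comul_one, Algebra.TensorProduct.one_def, TensorProduct.assoc_tmul,
    LinearMap.mul'_apply, rhd_one_one Ph]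

lemma comp_rule :
    TensorProduct.lift (LinearMap.mul R (Module.End R H))
        ∘ₗ TensorProduct.map (αm Ph) (αm Ph)
      = αm Ph ∘ₗ subProd R H Ph.rhd := by
  apply TensorProduct.ext'
  intro x y
  apply LinearMap.ext
  intro z
  have h := Ph.rhd_rhd x y z
  simp only [LinearMap.comp_apply, TensorProduct.map_tmul, lift_mul_tmul,
    Module.End.mul_apply]
  exact h

lemma alpha_one (β : H →ₗ[R] Module.End R H)
    (hβ₁ : convEnd R H ((TensorProduct.mk R H H).compr₂ Ph.rhd) β = convUnit R H)
    (hβ₂ : convEnd R H β ((TensorProduct.mk R H H).compr₂ Ph.rhd) = convUnit R H) :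
    αm Ph 1 = 1 := by
  have hsq : αm Ph 1 * αm Ph 1 = αm Ph 1 := by
    have h := LinearMap.congr_fun (comp_rule Ph) ((1 : H) ⊗ₜ[R] (1 : H))
    simpa [subProd_one_one Ph, lift_mul_tmul] using h
  have hab : αm Ph 1 * β 1 = 1 := by
    have h := LinearMap.congr_fun hβ₁ (1 : H)
    simp only [convEnd, convUnit, LinearMap.comp_apply, Bialgebra.comul_one,
      Algebra.TensorProduct.one_def, TensorProduct.map_tmul] at h
    simpa [αm, LinearMap.mul'_apply, Algebra.algebraMap_eq_smul_one] using h
  calc αm Ph 1 = αm Ph 1 * 1 := by rw [mul_one]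
    _ = αm Ph 1 * (αm Ph 1 * β 1) := by rw [hab]
    _ = (αm Ph 1 * αm Ph 1) * β 1 := by rw [mul_assoc]
    _ = αm Ph 1 * β 1 := by rw [hsq]
    _ = 1 := hab

lemma rhd_act (u : H →ₗ[R] H) :
    convB (LinearMap.id : Module.End R H →ₗ[R] H →ₗ[R] H) (αm Ph) u
      = Ph.rhd ∘ₗ TensorProduct.map LinearMap.id u ∘ₗ Δ := by
  unfold convB
  have hm : TensorProduct.map (αm Ph) u
      = TensorProduct.map (αm Ph) LinearMap.id ∘ₗ TensorProduct.map LinearMap.id u := by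
    rw [← TensorProduct.map_comp]; simp
  rw [hm]
  have hα : TensorProduct.lift (LinearMap.id : Module.End R H →ₗ[R] H →ₗ[R] H)
      ∘ₗ TensorProduct.map (αm Ph) LinearMap.id = Ph.rhd := by
    rw [← lift_comp, LinearMap.id_comp, lift_αm]
  calc TensorProduct.lift (LinearMap.id : Module.End R H →ₗ[R] H →ₗ[R] H)
        ∘ₗ (TensorProduct.map (αm Ph) LinearMap.id ∘ₗ TensorProduct.map LinearMap.id u) ∘ₗ Δ
      = (TensorProduct.lift (LinearMap.id : Module.End R H →ₗ[R] H →ₗ[R] H)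
          ∘ₗ TensorProduct.map (αm Ph) LinearMap.id)
        ∘ₗ TensorProduct.map LinearMap.id u ∘ₗ Δ := by simp only [LinearMap.comp_assoc]
    _ = Ph.rhd ∘ₗ TensorProduct.map LinearMap.id u ∘ₗ Δ := by rw [hα]

lemma subAntipode_eq (β : H →ₗ[R] Module.End R H) :
    subAntipode R H β
      = convB (LinearMap.id : Module.End R H →ₗ[R] H →ₗ[R] H) β
          (HopfAlgebra.antipode (R := R) (A := H)) := by
  unfold subAntipode convB
  rw [lift_compl₂]
  have hm : TensorProduct.map β (HopfAlgebra.antipode (R := R) (A := H))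
      = TensorProduct.map β LinearMap.id
        ∘ₗ TensorProduct.map LinearMap.id (HopfAlgebra.antipode (R := R) (A := H)) := by
    rw [← TensorProduct.map_comp]; simp
  rw [hm]
  have hβl : TensorProduct.lift (LinearMap.id : Module.End R H →ₗ[R] H →ₗ[R] H)
      ∘ₗ TensorProduct.map β LinearMap.id = TensorProduct.lift β := by
    rw [← lift_comp, LinearMap.id_comp]
  simp only [← LinearMap.comp_assoc]
  rw [hβl]

lemma subProd_act (u : H →ₗ[R] H) :
    subProd R H Ph.rhd ∘ₗ TensorProduct.map LinearMap.id u ∘ₗ Δ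
      = convB (LinearMap.mul R H) LinearMap.id
          (Ph.rhd ∘ₗ TensorProduct.map LinearMap.id u ∘ₗ Δ) := by
  unfold subProd convB
  have h1 : TensorProduct.map (Coalgebra.comul (R := R) (A := H)) (LinearMap.id (M := H))
        ∘ₗ TensorProduct.map LinearMap.id u
      = TensorProduct.map (Coalgebra.comul (R := R) (A := H)) u := by
    rw [← TensorProduct.map_comp]; simp
  have h2 : TensorProduct.map (LinearMap.id (M := H)) Ph.rhd
        ∘ₗ TensorProduct.map LinearMap.id (TensorProduct.map LinearMap.id u)
        ∘ₗ TensorProduct.map LinearMap.id (Coalgebra.comul (R := R) (A := H))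
      = TensorProduct.map LinearMap.id
          (Ph.rhd ∘ₗ TensorProduct.map LinearMap.id u ∘ₗ Δ) := by
    rw [← TensorProduct.map_comp, ← TensorProduct.map_comp]
    simp only [LinearMap.comp_id, LinearMap.id_comp, LinearMap.comp_assoc]
  calc (LinearMap.mul' R H ∘ₗ TensorProduct.map LinearMap.id Ph.rhd
        ∘ₗ (TensorProduct.assoc R H H H).toLinearMap
        ∘ₗ TensorProduct.map (Coalgebra.comul (R := R) (A := H)) LinearMap.id)
        ∘ₗ TensorProduct.map LinearMap.id u ∘ₗ Δ
      = LinearMap.mul' R H ∘ₗ TensorProduct.map LinearMap.id Ph.rhd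
        ∘ₗ (TensorProduct.assoc R H H H).toLinearMap
        ∘ₗ (TensorProduct.map (Coalgebra.comul (R := R) (A := H)) LinearMap.id
          ∘ₗ TensorProduct.map LinearMap.id u) ∘ₗ Δ := by simp only [LinearMap.comp_assoc]
    _ = LinearMap.mul' R H ∘ₗ TensorProduct.map LinearMap.id Ph.rhd
        ∘ₗ ((TensorProduct.assoc R H H H).toLinearMap
          ∘ₗ TensorProduct.map (Coalgebra.comul (R := R) (A := H)) u ∘ₗ Δ) := by
        rw [h1]
    _ = LinearMap.mul' R H ∘ₗ TensorProduct.map LinearMap.id Ph.rhd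
        ∘ₗ TensorProduct.map LinearMap.id (TensorProduct.map LinearMap.id u)
        ∘ₗ TensorProduct.map LinearMap.id (Coalgebra.comul (R := R) (A := H)) ∘ₗ Δ := by
        rw [assoc_map_comul]
    _ = LinearMap.mul' R H
        ∘ₗ (TensorProduct.map (LinearMap.id (M := H)) Ph.rhd
          ∘ₗ TensorProduct.map LinearMap.id (TensorProduct.map LinearMap.id u)
          ∘ₗ TensorProduct.map LinearMap.id (Coalgebra.comul (R := R) (A := H))) ∘ₗ Δ := by
        simp only [LinearMap.comp_assoc]
    _ = TensorProduct.lift (LinearMap.mul R H) ∘ₗ TensorProduct.map LinearMap.id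
          (Ph.rhd ∘ₗ TensorProduct.map LinearMap.id u ∘ₗ Δ) ∘ₗ Δ := by
        rw [h2]
        rfl

lemma T1 (β : H →ₗ[R] Module.End R H)
    (hβ₁ : convEnd R H ((TensorProduct.mk R H H).compr₂ Ph.rhd) β = convUnit R H)
    (hβ₂ : convEnd R H β ((TensorProduct.mk R H H).compr₂ Ph.rhd) = convUnit R H) :
    subProd R H Ph.rhd ∘ₗ TensorProduct.map LinearMap.id (subAntipode R H β) ∘ₗ Δ
      = eps (1 : H) := by
  have hb1 : convB (LinearMap.mul R (Module.End R H)) (αm Ph) β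
      = eps (1 : Module.End R H) := by
    rw [← convEnd_eq, ← convUnit_eq]; exact hβ₁
  rw [subProd_act, ← rhd_act, subAntipode_eq]
  rw [(convB_assoc (LinearMap.id : Module.End R H →ₗ[R] H →ₗ[R] H)
      (LinearMap.id : Module.End R H →ₗ[R] H →ₗ[R] H)
      (LinearMap.id : Module.End R H →ₗ[R] H →ₗ[R] H)
      (LinearMap.mul R (Module.End R H))
      (fun p q s => (Module.End.mul_apply p q s).symm) (αm Ph) β
      (HopfAlgebra.antipode (R := R) (A := H))).symm]
  rw [hb1, convB_eps_left]
  simp only [LinearMap.id_coe, id_eq, Module.End.one_eq_id, LinearMap.id_comp]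
  exact cv_id_antipode

lemma beta_eq (β : H →ₗ[R] Module.End R H)
    (hβ₁ : convEnd R H ((TensorProduct.mk R H H).compr₂ Ph.rhd) β = convUnit R H)
    (hβ₂ : convEnd R H β ((TensorProduct.mk R H H).compr₂ Ph.rhd) = convUnit R H) :
    β = αm Ph ∘ₗ subAntipode R H β := by
  have hb1 : convB (LinearMap.mul R (Module.End R H)) (αm Ph) β
      = eps (1 : Module.End R H) := by
    rw [← convEnd_eq, ← convUnit_eq]; exact hβ₁
  have hb2 : convB (LinearMap.mul R (Module.End R H)) β (αm Ph)
      = eps (1 : Module.End R H) := by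
    rw [← convEnd_eq, ← convUnit_eq]; exact hβ₂
  have h1 : convB (LinearMap.mul R (Module.End R H)) (αm Ph) (αm Ph ∘ₗ subAntipode R H β)
      = eps (1 : Module.End R H) := by
    unfold convB
    have hm : TensorProduct.map (αm Ph) (αm Ph ∘ₗ subAntipode R H β)
        = (TensorProduct.map (αm Ph) (αm Ph))
          ∘ₗ TensorProduct.map LinearMap.id (subAntipode R H β) := by
      rw [← TensorProduct.map_comp]; simp
    rw [hm]
    calc TensorProduct.lift (LinearMap.mul R (Module.End R H))
          ∘ₗ (TensorProduct.map (αm Ph) (αm Ph)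
            ∘ₗ TensorProduct.map LinearMap.id (subAntipode R H β)) ∘ₗ Δ
        = (TensorProduct.lift (LinearMap.mul R (Module.End R H))
            ∘ₗ TensorProduct.map (αm Ph) (αm Ph))
          ∘ₗ TensorProduct.map LinearMap.id (subAntipode R H β) ∘ₗ Δ := by
          simp only [LinearMap.comp_assoc]
      _ = (αm Ph ∘ₗ subProd R H Ph.rhd)
          ∘ₗ TensorProduct.map LinearMap.id (subAntipode R H β) ∘ₗ Δ := by rw [comp_rule]
      _ = αm Ph ∘ₗ (subProd R H Ph.rhd
          ∘ₗ TensorProduct.map LinearMap.id (subAntipode R H β) ∘ₗ Δ) := by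
          simp only [LinearMap.comp_assoc]
      _ = αm Ph ∘ₗ eps (1 : H) := by rw [T1 Ph β hβ₁ hβ₂]
      _ = eps (1 : Module.End R H) := by rw [comp_eps, alpha_one Ph β hβ₁ hβ₂]
  calc β = convB (LinearMap.mul R (Module.End R H)) β (eps 1) := by rw [cv_one_right]
    _ = convB (LinearMap.mul R (Module.End R H)) β
        (convB (LinearMap.mul R (Module.End R H)) (αm Ph)
          (αm Ph ∘ₗ subAntipode R H β)) := by rw [h1]
    _ = convB (LinearMap.mul R (Module.End R H))
        (convB (LinearMap.mul R (Module.End R H)) β (αm Ph))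
        (αm Ph ∘ₗ subAntipode R H β) := by rw [cv_assoc]
    _ = convB (LinearMap.mul R (Module.End R H)) (eps 1)
        (αm Ph ∘ₗ subAntipode R H β) := by rw [hb2]
    _ = αm Ph ∘ₗ subAntipode R H β := by rw [cv_one_left]

/-- `D γ : x ↦ γ x₁ ⊗ γ x₂` as an endomorphism of `H ⊗ H`. -/
noncomputable def Dm (γ : H →ₗ[R] Module.End R H) : H →ₗ[R] Module.End R (H ⊗[R] H) :=
  (TensorProduct.homTensorHomMap (RingHom.id R) H H H H) ∘ₗ TensorProduct.map γ γ ∘ₗ Δ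

/-- postcomposition with `Δ` -/
noncomputable def preD : Module.End R H →ₗ[R] (H →ₗ[R] H ⊗[R] H) :=
  LinearMap.llcomp R H H (H ⊗[R] H) Δ

/-- precomposition with `Δ` -/
noncomputable def postD : Module.End R (H ⊗[R] H) →ₗ[R] (H →ₗ[R] H ⊗[R] H) :=
  (LinearMap.llcomp R H (H ⊗[R] H) (H ⊗[R] H)).flip Δ

/-- postcomposition with `mul'` -/
noncomputable def preM : Module.End R H →ₗ[R] (H ⊗[R] H →ₗ[R] H) :=
  (LinearMap.llcomp R (H ⊗[R] H) H H).flip (LinearMap.mul' R H)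

/-- precomposition with `mul'` -/
noncomputable def postM : Module.End R (H ⊗[R] H) →ₗ[R] (H ⊗[R] H →ₗ[R] H) :=
  LinearMap.llcomp R (H ⊗[R] H) (H ⊗[R] H) H (LinearMap.mul' R H)

lemma hD_alpha : preD ∘ₗ αm Ph = postD ∘ₗ Dm (αm Ph) := by
  apply LinearMap.ext; intro x
  apply LinearMap.ext; intro y
  have hc := LinearMap.congr_fun Ph.comul_rhd (x ⊗ₜ[R] y)
  simp only [LinearMap.comp_apply, TensorProduct.comul_def,
    TensorProduct.map_tmul, TensorProduct.AlgebraTensorModule.map_tmul] at hc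
  obtain ⟨ix, lx, rx, hx⟩ := Coalgebra.Repr.arbitrary R x
  obtain ⟨iy, ly, ry, hy⟩ := Coalgebra.Repr.arbitrary R y
  simp only [preD, postD, Dm, αm, LinearMap.comp_apply, LinearMap.llcomp_apply,
    LinearMap.flip_apply, LinearMap.compr₂_apply, TensorProduct.mk_apply]
  rw [hc]
  rw [← hx, ← hy]
  simp [TensorProduct.sum_tmul, TensorProduct.tmul_sum, Finset.mul_sum,
    TensorProduct.tensorTensorTensorComm_tmul, TensorProduct.homTensorHomMap_apply,
    LinearMap.sum_apply, TensorProduct.AlgebraTensorModule.tensorTensorTensorComm_tmul]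

lemma hM_alpha : preM ∘ₗ αm Ph = postM ∘ₗ Dm (αm Ph) := by
  apply LinearMap.ext; intro x
  apply TensorProduct.ext'; intro u v
  have hc := Ph.rhd_mul x u v
  obtain ⟨ix, lx, rx, hx⟩ := Coalgebra.Repr.arbitrary R x
  simp only [preM, postM, Dm, αm, LinearMap.comp_apply, LinearMap.llcomp_apply,
    LinearMap.flip_apply, LinearMap.compr₂_apply, TensorProduct.mk_apply,
    LinearMap.mul'_apply]
  rw [hc]
  rw [← hx]
  simp [TensorProduct.sum_tmul, TensorProduct.tmul_sum,
    TensorProduct.homTensorHomMap_apply, LinearMap.sum_apply, LinearMap.mul'_apply]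

lemma map_eps_eps {P' Q' : Type*} [AddCommMonoid P'] [AddCommMonoid Q']
    [Module R P'] [Module R Q'] (p : P') (q : Q') :
    TensorProduct.map (eps (R := R) (H := H) p) (eps (R := R) (H := H) q) ∘ₗ Δ
      = eps (p ⊗ₜ[R] q) := by
  have hsplit : TensorProduct.map (eps (R := R) (H := H) p) (eps (R := R) (H := H) q)
      = TensorProduct.map (eps (R := R) (H := H) p) (LinearMap.toSpanSingleton R Q' q)
        ∘ₗ TensorProduct.map (LinearMap.id (M := H)) (Coalgebra.counit (R := R) (A := H)) := by
    rw [← TensorProduct.map_comp]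
    simp [eps]
  have h2 : TensorProduct.map (LinearMap.id (M := H)) (Coalgebra.counit (R := R) (A := H))
      ∘ₗ Δ = (TensorProduct.mk R H R).flip 1 := by
    rw [show TensorProduct.map (LinearMap.id (M := H)) (Coalgebra.counit (R := R) (A := H))
        = (Coalgebra.counit (R := R) (A := H)).lTensor H from rfl]
    exact Coalgebra.lTensor_counit_comp_comul
  rw [hsplit, LinearMap.comp_assoc, h2]
  ext x
  simp [TensorProduct.smul_tmul']

lemma Dm_conv
    (hcop : ∀ x : H, (TensorProduct.comm R H H) (Coalgebra.comul x) = Coalgebra.comul x)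
    (f g : H →ₗ[R] Module.End R H)
    (hfg : convB (LinearMap.mul R (Module.End R H)) f g = eps 1) :
    convB (LinearMap.mul R (Module.End R (H ⊗[R] H))) (Dm f) (Dm g)
      = eps (1 : Module.End R (H ⊗[R] H)) := by
  set T := TensorProduct.homTensorHomMap (RingHom.id R) H H H H with hT
  set K := TensorProduct.lift (LinearMap.mul R (Module.End R H)) ∘ₗ TensorProduct.map f g
    with hK
  have hfg' : K ∘ₗ Δ = eps (1 : Module.End R H) := by
    rw [hK, LinearMap.comp_assoc]
    exact hfg
  have hm : TensorProduct.map (T ∘ₗ TensorProduct.map f f ∘ₗ Δ)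
        (T ∘ₗ TensorProduct.map g g ∘ₗ Δ)
      = TensorProduct.map (T ∘ₗ TensorProduct.map f f) (T ∘ₗ TensorProduct.map g g)
        ∘ₗ TensorProduct.map Δ Δ := by
    rw [← TensorProduct.map_comp]
    simp only [LinearMap.comp_assoc]
  have hZ : TensorProduct.lift (LinearMap.mul R (Module.End R (H ⊗[R] H)))
        ∘ₗ TensorProduct.map (T ∘ₗ TensorProduct.map f f) (T ∘ₗ TensorProduct.map g g)
      = (T ∘ₗ TensorProduct.map K K)
        ∘ₗ (TensorProduct.tensorTensorTensorComm R H H H H).toLinearMap := by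
    apply TensorProduct.ext
    apply TensorProduct.ext
    ext a b c d
    simp [hT, hK, lift_mul_tmul, TensorProduct.homTensorHomMap_apply, Module.End.mul_eq_comp,
      ← TensorProduct.map_comp]
  have hKE : TensorProduct.map K K ∘ₗ E4
      = TensorProduct.map (eps (1 : Module.End R H)) (eps (1 : Module.End R H)) ∘ₗ Δ := by
    rw [← LinearMap.comp_assoc, ← TensorProduct.map_comp, hfg']
  have hone : T ((1 : Module.End R H) ⊗ₜ[R] (1 : Module.End R H))
      = (1 : Module.End R (H ⊗[R] H)) := by
    rw [hT, TensorProduct.homTensorHomMap_apply, Module.End.one_eq_id, TensorProduct.map_id]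
    rfl
  calc convB (LinearMap.mul R (Module.End R (H ⊗[R] H))) (Dm f) (Dm g)
      = TensorProduct.lift (LinearMap.mul R (Module.End R (H ⊗[R] H)))
        ∘ₗ TensorProduct.map (T ∘ₗ TensorProduct.map f f) (T ∘ₗ TensorProduct.map g g)
        ∘ₗ E4 := by
        unfold convB Dm
        rw [hm]
        simp only [LinearMap.comp_assoc]
    _ = ((T ∘ₗ TensorProduct.map K K)
        ∘ₗ (TensorProduct.tensorTensorTensorComm R H H H H).toLinearMap) ∘ₗ E4 := by
        rw [← LinearMap.comp_assoc, hZ]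
    _ = T ∘ₗ TensorProduct.map K K ∘ₗ E4 := by
        rw [LinearMap.comp_assoc, LinearMap.comp_assoc, ttc_E4 hcop]
    _ = T ∘ₗ eps ((1 : Module.End R H) ⊗ₜ[R] (1 : Module.End R H)) := by
        rw [hKE, map_eps_eps]
    _ = eps (1 : Module.End R (H ⊗[R] H)) := by
        rw [comp_eps, hone]

section BetaCompat
variable (β : H →ₗ[R] Module.End R H)

lemma hb1' (hβ₁ : convEnd R H ((TensorProduct.mk R H H).compr₂ Ph.rhd) β = convUnit R H) :
    convB (LinearMap.mul R (Module.End R H)) (αm Ph) β = eps (1 : Module.End R H) := by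
  rw [← convEnd_eq, ← convUnit_eq]; exact hβ₁

lemma hb2' (hβ₂ : convEnd R H β ((TensorProduct.mk R H H).compr₂ Ph.rhd) = convUnit R H) :
    convB (LinearMap.mul R (Module.End R H)) β (αm Ph) = eps (1 : Module.End R H) := by
  rw [← convEnd_eq, ← convUnit_eq]; exact hβ₂

lemma hD_beta
    (hβ₁ : convEnd R H ((TensorProduct.mk R H H).compr₂ Ph.rhd) β = convUnit R H)
    (hβ₂ : convEnd R H β ((TensorProduct.mk R H H).compr₂ Ph.rhd) = convUnit R H)
    (hcop : ∀ x : H, (TensorProduct.comm R H H) (Coalgebra.comul x) = Coalgebra.comul x) :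
    preD ∘ₗ β = postD ∘ₗ Dm β := by
  have hb1 := hb1' Ph β hβ₁
  have hb2 := hb2' Ph β hβ₂
  have h9b := Dm_conv hcop β (αm Ph) hb2
  set bL := LinearMap.llcomp (σ₁₂ := RingHom.id R) (σ₂₃ := RingHom.id R) (σ₁₃ := RingHom.id R) R H (H ⊗[R] H) (H ⊗[R] H) with hbL
  have e1 : bL.compl₂ (preD (R := R) (H := H))
      = (LinearMap.llcomp R H H (H ⊗[R] H)) ∘ₗ (postD (R := R) (H := H)) := by
    ext T g y
    rfl
  have e2 : (LinearMap.llcomp R H H (H ⊗[R] H)) ∘ₗ (preD (R := R) (H := H))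
      = (LinearMap.mul R (Module.End R H)).compr₂ (preD (R := R) (H := H)) := by
    ext g g' y
    rfl
  have stepC : convB bL (Dm (αm Ph)) (preD ∘ₗ β) = eps Δ := by
    rw [← convB_comp_right, e1, convB_comp_left, ← hD_alpha, ← convB_comp_left, e2,
      convB_compr₂, hb1, comp_eps]
    congr 1
  have hbL1 : bL (1 : Module.End R (H ⊗[R] H)) = LinearMap.id := by
    rw [Module.End.one_eq_id]
    ext f y
    rfl
  have h0 : convB bL (eps (1 : Module.End R (H ⊗[R] H))) (preD ∘ₗ β) = preD ∘ₗ β := by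
    rw [convB_eps_left, hbL1, LinearMap.id_comp]
  calc preD ∘ₗ β
      = convB bL (eps (1 : Module.End R (H ⊗[R] H))) (preD ∘ₗ β) := h0.symm
    _ = convB bL (convB (LinearMap.mul R (Module.End R (H ⊗[R] H))) (Dm β) (Dm (αm Ph)))
        (preD ∘ₗ β) := by rw [h9b]
    _ = convB bL (Dm β) (convB bL (Dm (αm Ph)) (preD ∘ₗ β)) := by
        exact convB_assoc bL bL bL (LinearMap.mul R (Module.End R (H ⊗[R] H)))
          (fun p q s => by ext t; rfl) (Dm β) (Dm (αm Ph))
          (preD ∘ₗ β)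
    _ = convB bL (Dm β) (eps Δ) := by rw [stepC]
    _ = postD ∘ₗ Dm β := by rw [convB_eps_right]; rfl

lemma hM_beta
    (hβ₁ : convEnd R H ((TensorProduct.mk R H H).compr₂ Ph.rhd) β = convUnit R H)
    (hβ₂ : convEnd R H β ((TensorProduct.mk R H H).compr₂ Ph.rhd) = convUnit R H)
    (hcop : ∀ x : H, (TensorProduct.comm R H H) (Coalgebra.comul x) = Coalgebra.comul x) :
    preM ∘ₗ β = postM ∘ₗ Dm β := by
  have hb1 := hb1' Ph β hβ₁
  have hb2 := hb2' Ph β hβ₂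
  have h9a := Dm_conv hcop (αm Ph) β hb1
  set bR' := LinearMap.llcomp (σ₁₂ := RingHom.id R) (σ₂₃ := RingHom.id R) (σ₁₃ := RingHom.id R) R (H ⊗[R] H) (H ⊗[R] H) H with hbR
  set bL'' := LinearMap.llcomp (σ₁₂ := RingHom.id R) (σ₂₃ := RingHom.id R) (σ₁₃ := RingHom.id R) R (H ⊗[R] H) H H with hbLL
  have e3 : bR' ∘ₗ (preM (R := R) (H := H)) = bL''.compl₂ (postM (R := R) (H := H)) := by
    ext g T w
    rfl
  have e4 : bL''.compl₂ (preM (R := R) (H := H))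
      = (LinearMap.mul R (Module.End R H)).compr₂ (preM (R := R) (H := H)) := by
    ext g g' w
    rfl
  have stepC : convB bR' (preM ∘ₗ β) (Dm (αm Ph)) = eps (LinearMap.mul' R H) := by
    rw [← convB_comp_left, e3, convB_comp_right, ← hM_alpha, ← convB_comp_right, e4,
      convB_compr₂, hb2, comp_eps]
    congr 1
  have hbR1 : bR'.flip (1 : Module.End R (H ⊗[R] H)) = LinearMap.id := by
    rw [Module.End.one_eq_id]
    ext f w
    rfl
  have h0 : convB bR' (preM ∘ₗ β) (eps (1 : Module.End R (H ⊗[R] H))) = preM ∘ₗ β := by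
    rw [convB_eps_right, hbR1, LinearMap.id_comp]
  calc preM ∘ₗ β
      = convB bR' (preM ∘ₗ β) (eps (1 : Module.End R (H ⊗[R] H))) := h0.symm
    _ = convB bR' (preM ∘ₗ β)
        (convB (LinearMap.mul R (Module.End R (H ⊗[R] H))) (Dm (αm Ph)) (Dm β)) := by
        rw [h9a]
    _ = convB bR' (convB bR' (preM ∘ₗ β) (Dm (αm Ph))) (Dm β) := by
        exact (convB_assoc bR' (LinearMap.mul R (Module.End R (H ⊗[R] H))) bR' bR'
          (fun p q s => by ext t; rfl) (preM ∘ₗ β)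
          (Dm (αm Ph)) (Dm β)).symm
    _ = convB bR' (eps (LinearMap.mul' R H)) (Dm β) := by rw [stepC]
    _ = postM ∘ₗ Dm β := by rw [convB_eps_left]; rfl


lemma comul_subAntipode
    (hβ₁ : convEnd R H ((TensorProduct.mk R H H).compr₂ Ph.rhd) β = convUnit R H)
    (hβ₂ : convEnd R H β ((TensorProduct.mk R H H).compr₂ Ph.rhd) = convUnit R H)
    (hcop : ∀ x : H, (TensorProduct.comm R H H) (Coalgebra.comul x) = Coalgebra.comul x) :
    (Coalgebra.comul (R := R) (A := H)) ∘ₗ subAntipode R H β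
      = TensorProduct.map (subAntipode R H β) (subAntipode R H β) ∘ₗ Δ := by
  set T := TensorProduct.homTensorHomMap (RingHom.id R) H H H H with hT
  set L := TensorProduct.lift (β.compl₂ (HopfAlgebra.antipode (R := R) (A := H))) with hL
  have e5 : (LinearMap.id : Module.End R H →ₗ[R] H →ₗ[R] H).compr₂ Δ
      = preD (R := R) (H := H) := by
    ext g y; rfl
  have e6 : postD (R := R) (H := H)
      = (LinearMap.id : Module.End R (H ⊗[R] H) →ₗ[R] (H ⊗[R] H) →ₗ[R] H ⊗[R] H).compl₂ Δ := by
    ext f y; rfl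
  have hW : TensorProduct.lift
        (LinearMap.id : Module.End R (H ⊗[R] H) →ₗ[R] (H ⊗[R] H) →ₗ[R] H ⊗[R] H)
        ∘ₗ TensorProduct.map (T ∘ₗ TensorProduct.map β β)
          (TensorProduct.map (HopfAlgebra.antipode (R := R) (A := H))
            (HopfAlgebra.antipode (R := R) (A := H)))
      = TensorProduct.map L L
        ∘ₗ (TensorProduct.tensorTensorTensorComm R H H H H).toLinearMap := by
    apply TensorProduct.ext
    apply TensorProduct.ext
    ext a b c d
    simp [hT, hL, TensorProduct.homTensorHomMap_apply]
  calc (Coalgebra.comul (R := R) (A := H)) ∘ₗ subAntipode R H β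
      = (Coalgebra.comul (R := R) (A := H))
        ∘ₗ convB (LinearMap.id : Module.End R H →ₗ[R] H →ₗ[R] H) β
            (HopfAlgebra.antipode (R := R) (A := H)) := by rw [subAntipode_eq]
    _ = convB ((LinearMap.id : Module.End R H →ₗ[R] H →ₗ[R] H).compr₂ Δ) β
          (HopfAlgebra.antipode (R := R) (A := H)) := by rw [convB_compr₂]
    _ = convB (preD (R := R) (H := H)) β (HopfAlgebra.antipode (R := R) (A := H)) := by
        rw [e5]
    _ = convB (postD (R := R) (H := H)) (Dm β) (HopfAlgebra.antipode (R := R) (A := H)) := by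
        exact convB_congr_left _ _ _ _ _ (hD_beta Ph β hβ₁ hβ₂ hcop)
    _ = convB ((LinearMap.id : Module.End R (H ⊗[R] H) →ₗ[R] (H ⊗[R] H) →ₗ[R] H ⊗[R] H).compl₂ Δ)
          (Dm β) (HopfAlgebra.antipode (R := R) (A := H)) := by rw [e6]
    _ = convB (LinearMap.id : Module.End R (H ⊗[R] H) →ₗ[R] (H ⊗[R] H) →ₗ[R] H ⊗[R] H)
          (Dm β) ((Coalgebra.comul (R := R) (A := H))
            ∘ₗ HopfAlgebra.antipode (R := R) (A := H)) := by rw [convB_comp_right]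
    _ = convB (LinearMap.id : Module.End R (H ⊗[R] H) →ₗ[R] (H ⊗[R] H) →ₗ[R] H ⊗[R] H)
          (Dm β) (TensorProduct.map (HopfAlgebra.antipode (R := R) (A := H))
            (HopfAlgebra.antipode (R := R) (A := H)) ∘ₗ Δ) := by rw [comul_antipode hcop]
    _ = TensorProduct.lift
          (LinearMap.id : Module.End R (H ⊗[R] H) →ₗ[R] (H ⊗[R] H) →ₗ[R] H ⊗[R] H)
        ∘ₗ TensorProduct.map (T ∘ₗ TensorProduct.map β β)
          (TensorProduct.map (HopfAlgebra.antipode (R := R) (A := H))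
            (HopfAlgebra.antipode (R := R) (A := H))) ∘ₗ E4 := by
        unfold convB Dm
        rw [show TensorProduct.map
            ((TensorProduct.homTensorHomMap (RingHom.id R) H H H H) ∘ₗ TensorProduct.map β β ∘ₗ Δ)
            (TensorProduct.map (HopfAlgebra.antipode (R := R) (A := H))
              (HopfAlgebra.antipode (R := R) (A := H)) ∘ₗ Δ)
            = TensorProduct.map
              ((TensorProduct.homTensorHomMap (RingHom.id R) H H H H) ∘ₗ TensorProduct.map β β)
              (TensorProduct.map (HopfAlgebra.antipode (R := R) (A := H))
                (HopfAlgebra.antipode (R := R) (A := H)))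
              ∘ₗ TensorProduct.map Δ Δ from by
          rw [← TensorProduct.map_comp]; simp only [LinearMap.comp_assoc]]
        simp only [LinearMap.comp_assoc, hT]
    _ = (TensorProduct.map L L
          ∘ₗ (TensorProduct.tensorTensorTensorComm R H H H H).toLinearMap) ∘ₗ E4 := by
        rw [← LinearMap.comp_assoc, hW]
    _ = TensorProduct.map L L ∘ₗ E4 := by
        simp only [LinearMap.comp_assoc]
        rw [ttc_E4 hcop]
    _ = TensorProduct.map (L ∘ₗ Δ) (L ∘ₗ Δ) ∘ₗ Δ := by
        rw [← LinearMap.comp_assoc, ← TensorProduct.map_comp]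
    _ = TensorProduct.map (subAntipode R H β) (subAntipode R H β) ∘ₗ Δ := by
        rw [hL]; rfl

lemma act_meas (f g : H →ₗ[R] H)
    (hβ₁ : convEnd R H ((TensorProduct.mk R H H).compr₂ Ph.rhd) β = convUnit R H)
    (hβ₂ : convEnd R H β ((TensorProduct.mk R H H).compr₂ Ph.rhd) = convUnit R H)
    (hcop : ∀ x : H, (TensorProduct.comm R H H) (Coalgebra.comul x) = Coalgebra.comul x) :
    convB (LinearMap.mul R H)
        (convB (LinearMap.id : Module.End R H →ₗ[R] H →ₗ[R] H) β f)
        (convB (LinearMap.id : Module.End R H →ₗ[R] H →ₗ[R] H) β g)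
      = convB (LinearMap.id : Module.End R H →ₗ[R] H →ₗ[R] H) β
          (convB (LinearMap.mul R H) f g) := by
  set T := TensorProduct.homTensorHomMap (RingHom.id R) H H H H with hT
  have hZ2 : TensorProduct.lift (LinearMap.mul R H)
        ∘ₗ TensorProduct.map
          (TensorProduct.lift (LinearMap.id : Module.End R H →ₗ[R] H →ₗ[R] H)
            ∘ₗ TensorProduct.map β f)
          (TensorProduct.lift (LinearMap.id : Module.End R H →ₗ[R] H →ₗ[R] H)
            ∘ₗ TensorProduct.map β g)
      = (TensorProduct.lift ((postM (R := R) (H := H)) ∘ₗ T)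
          ∘ₗ TensorProduct.map (TensorProduct.map β β) (TensorProduct.map f g))
        ∘ₗ (TensorProduct.tensorTensorTensorComm R H H H H).toLinearMap := by
    apply TensorProduct.ext
    apply TensorProduct.ext
    ext a b c d
    simp [hT, postM, lift_mul_tmul, TensorProduct.homTensorHomMap_apply,
      LinearMap.mul'_apply]
  have hDm : T ∘ₗ (TensorProduct.map β β ∘ₗ Δ) = Dm β := by
    unfold Dm
    simp only [LinearMap.comp_assoc, hT]
  have e7 : preM (R := R) (H := H)
      = (LinearMap.id : Module.End R H →ₗ[R] H →ₗ[R] H).compl₂ (LinearMap.mul' R H) := by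
    ext g' w; rfl
  calc convB (LinearMap.mul R H)
        (convB (LinearMap.id : Module.End R H →ₗ[R] H →ₗ[R] H) β f)
        (convB (LinearMap.id : Module.End R H →ₗ[R] H →ₗ[R] H) β g)
      = (TensorProduct.lift (LinearMap.mul R H)
          ∘ₗ TensorProduct.map
            (TensorProduct.lift (LinearMap.id : Module.End R H →ₗ[R] H →ₗ[R] H)
              ∘ₗ TensorProduct.map β f)
            (TensorProduct.lift (LinearMap.id : Module.End R H →ₗ[R] H →ₗ[R] H)
              ∘ₗ TensorProduct.map β g)) ∘ₗ E4 := by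
        unfold convB
        rw [show TensorProduct.map
            (TensorProduct.lift (LinearMap.id : Module.End R H →ₗ[R] H →ₗ[R] H)
              ∘ₗ TensorProduct.map β f ∘ₗ Δ)
            (TensorProduct.lift (LinearMap.id : Module.End R H →ₗ[R] H →ₗ[R] H)
              ∘ₗ TensorProduct.map β g ∘ₗ Δ)
            = TensorProduct.map
              (TensorProduct.lift (LinearMap.id : Module.End R H →ₗ[R] H →ₗ[R] H)
                ∘ₗ TensorProduct.map β f)
              (TensorProduct.lift (LinearMap.id : Module.End R H →ₗ[R] H →ₗ[R] H)
                ∘ₗ TensorProduct.map β g)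
              ∘ₗ TensorProduct.map Δ Δ from by
          rw [← TensorProduct.map_comp]; simp only [LinearMap.comp_assoc]]
        simp only [LinearMap.comp_assoc]
    _ = ((TensorProduct.lift ((postM (R := R) (H := H)) ∘ₗ T)
          ∘ₗ TensorProduct.map (TensorProduct.map β β) (TensorProduct.map f g))
        ∘ₗ (TensorProduct.tensorTensorTensorComm R H H H H).toLinearMap) ∘ₗ E4 := by
        rw [hZ2]
    _ = (TensorProduct.lift ((postM (R := R) (H := H)) ∘ₗ T)
          ∘ₗ TensorProduct.map (TensorProduct.map β β) (TensorProduct.map f g)) ∘ₗ E4 := by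
        simp only [LinearMap.comp_assoc]
        rw [ttc_E4 hcop]
    _ = convB ((postM (R := R) (H := H)) ∘ₗ T) (TensorProduct.map β β ∘ₗ Δ)
          (TensorProduct.map f g ∘ₗ Δ) := by
        unfold convB
        rw [show TensorProduct.map (TensorProduct.map β β ∘ₗ Δ) (TensorProduct.map f g ∘ₗ Δ)
            = TensorProduct.map (TensorProduct.map β β) (TensorProduct.map f g)
              ∘ₗ TensorProduct.map Δ Δ from by rw [← TensorProduct.map_comp]]
        simp only [LinearMap.comp_assoc]
    _ = convB (postM (R := R) (H := H)) (T ∘ₗ (TensorProduct.map β β ∘ₗ Δ))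
          (TensorProduct.map f g ∘ₗ Δ) := by rw [convB_comp_left]
    _ = convB (postM (R := R) (H := H)) (Dm β) (TensorProduct.map f g ∘ₗ Δ) := by rw [hDm]
    _ = convB (preM (R := R) (H := H)) β (TensorProduct.map f g ∘ₗ Δ) := by
        exact convB_congr_left _ _ _ _ _ (hM_beta Ph β hβ₁ hβ₂ hcop).symm
    _ = convB ((LinearMap.id : Module.End R H →ₗ[R] H →ₗ[R] H).compl₂ (LinearMap.mul' R H)) β
          (TensorProduct.map f g ∘ₗ Δ) := by rw [e7]
    _ = convB (LinearMap.id : Module.End R H →ₗ[R] H →ₗ[R] H) β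
          (LinearMap.mul' R H ∘ₗ TensorProduct.map f g ∘ₗ Δ) := by
        rw [convB_comp_right]
    _ = convB (LinearMap.id : Module.End R H →ₗ[R] H →ₗ[R] H) β
          (convB (LinearMap.mul R H) f g) := rfl

lemma ev_one_beta
    (hβ₁ : convEnd R H ((TensorProduct.mk R H H).compr₂ Ph.rhd) β = convUnit R H)
    (hβ₂ : convEnd R H β ((TensorProduct.mk R H H).compr₂ Ph.rhd) = convUnit R H) :
    (LinearMap.id : Module.End R H →ₗ[R] H →ₗ[R] H).flip 1 ∘ₗ β = eps (1 : H) := by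
  have e8 : cOne Ph
      = convB (LinearMap.id : Module.End R H →ₗ[R] H →ₗ[R] H) (αm Ph) (eps (1 : H)) := by
    rw [convB_eps_right]
    ext x; rfl
  calc (LinearMap.id : Module.End R H →ₗ[R] H →ₗ[R] H).flip 1 ∘ₗ β
      = convB (LinearMap.id : Module.End R H →ₗ[R] H →ₗ[R] H) β (eps (1 : H)) := by
        rw [convB_eps_right]
    _ = convB (LinearMap.id : Module.End R H →ₗ[R] H →ₗ[R] H) β (cOne Ph) := by
        rw [c_eq_eps]
    _ = convB (LinearMap.id : Module.End R H →ₗ[R] H →ₗ[R] H) β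
        (convB (LinearMap.id : Module.End R H →ₗ[R] H →ₗ[R] H) (αm Ph) (eps (1 : H))) := by
        rw [e8]
    _ = convB (LinearMap.id : Module.End R H →ₗ[R] H →ₗ[R] H)
        (convB (LinearMap.mul R (Module.End R H)) β (αm Ph)) (eps (1 : H)) := by
        exact (convB_assoc (LinearMap.id : Module.End R H →ₗ[R] H →ₗ[R] H)
          (LinearMap.id : Module.End R H →ₗ[R] H →ₗ[R] H)
          (LinearMap.id : Module.End R H →ₗ[R] H →ₗ[R] H)
          (LinearMap.mul R (Module.End R H))
          (fun p q s => rfl) β (αm Ph) (eps (1 : H))).symm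
    _ = convB (LinearMap.id : Module.End R H →ₗ[R] H →ₗ[R] H) (eps (1 : Module.End R H))
        (eps (1 : H)) := by rw [hb2' Ph β hβ₂]
    _ = eps (1 : H) := by
        rw [convB_eps_left]
        simp only [LinearMap.id_coe, id_eq, Module.End.one_eq_id, LinearMap.id_comp]

lemma subProd_act_left (u : H →ₗ[R] H)
    (hu : (Coalgebra.comul (R := R) (A := H)) ∘ₗ u = TensorProduct.map u u ∘ₗ Δ) :
    subProd R H Ph.rhd ∘ₗ TensorProduct.map u LinearMap.id ∘ₗ Δ
      = convB (LinearMap.mul R H) u (Ph.rhd ∘ₗ TensorProduct.map u LinearMap.id ∘ₗ Δ) := by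
  unfold subProd convB
  have h1 : TensorProduct.map (Coalgebra.comul (R := R) (A := H)) (LinearMap.id (M := H))
        ∘ₗ TensorProduct.map u LinearMap.id
      = TensorProduct.map (TensorProduct.map u u) (LinearMap.id (M := H))
        ∘ₗ TensorProduct.map Δ (LinearMap.id (M := H)) := by
    rw [← TensorProduct.map_comp, hu, TensorProduct.map_comp]
  have h2 : (TensorProduct.assoc R H H H).toLinearMap
        ∘ₗ TensorProduct.map (TensorProduct.map u u) (LinearMap.id (M := H))
        ∘ₗ (TensorProduct.assoc R H H H).symm.toLinearMap
      = TensorProduct.map u (TensorProduct.map u LinearMap.id) := by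
    apply TensorProduct.ext
    ext x y z
    simp
  have h3 : TensorProduct.map (LinearMap.id (M := H)) Ph.rhd
        ∘ₗ TensorProduct.map u (TensorProduct.map u LinearMap.id)
        ∘ₗ TensorProduct.map LinearMap.id (Coalgebra.comul (R := R) (A := H))
      = TensorProduct.map u (Ph.rhd ∘ₗ TensorProduct.map u LinearMap.id ∘ₗ Δ) := by
    rw [← TensorProduct.map_comp, ← TensorProduct.map_comp]
    simp only [LinearMap.comp_id, LinearMap.id_comp, LinearMap.comp_assoc]
  calc (LinearMap.mul' R H ∘ₗ TensorProduct.map LinearMap.id Ph.rhd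
        ∘ₗ (TensorProduct.assoc R H H H).toLinearMap
        ∘ₗ TensorProduct.map (Coalgebra.comul (R := R) (A := H)) LinearMap.id)
        ∘ₗ TensorProduct.map u LinearMap.id ∘ₗ Δ
      = LinearMap.mul' R H ∘ₗ TensorProduct.map LinearMap.id Ph.rhd
        ∘ₗ (TensorProduct.assoc R H H H).toLinearMap
        ∘ₗ (TensorProduct.map (Coalgebra.comul (R := R) (A := H)) LinearMap.id
          ∘ₗ TensorProduct.map u LinearMap.id) ∘ₗ Δ := by simp only [LinearMap.comp_assoc]
    _ = LinearMap.mul' R H ∘ₗ TensorProduct.map LinearMap.id Ph.rhd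
        ∘ₗ (TensorProduct.assoc R H H H).toLinearMap
        ∘ₗ TensorProduct.map (TensorProduct.map u u) (LinearMap.id (M := H))
        ∘ₗ (TensorProduct.map Δ (LinearMap.id (M := H)) ∘ₗ Δ) := by
        rw [h1]; simp only [LinearMap.comp_assoc]
    _ = LinearMap.mul' R H ∘ₗ TensorProduct.map LinearMap.id Ph.rhd
        ∘ₗ ((TensorProduct.assoc R H H H).toLinearMap
        ∘ₗ TensorProduct.map (TensorProduct.map u u) (LinearMap.id (M := H))
        ∘ₗ (TensorProduct.assoc R H H H).symm.toLinearMap)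
        ∘ₗ TensorProduct.map LinearMap.id (Coalgebra.comul (R := R) (A := H)) ∘ₗ Δ := by
        rw [comul_comul_left]; simp only [LinearMap.comp_assoc]
    _ = LinearMap.mul' R H
        ∘ₗ (TensorProduct.map (LinearMap.id (M := H)) Ph.rhd
          ∘ₗ TensorProduct.map u (TensorProduct.map u LinearMap.id)
          ∘ₗ TensorProduct.map LinearMap.id (Coalgebra.comul (R := R) (A := H))) ∘ₗ Δ := by
        rw [h2]; simp only [LinearMap.comp_assoc]
    _ = TensorProduct.lift (LinearMap.mul R H)
        ∘ₗ TensorProduct.map u (Ph.rhd ∘ₗ TensorProduct.map u LinearMap.id ∘ₗ Δ) ∘ₗ Δ := by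
        rw [h3]; rfl

lemma T2
    (hβ₁ : convEnd R H ((TensorProduct.mk R H H).compr₂ Ph.rhd) β = convUnit R H)
    (hβ₂ : convEnd R H β ((TensorProduct.mk R H H).compr₂ Ph.rhd) = convUnit R H)
    (hcop : ∀ x : H, (TensorProduct.comm R H H) (Coalgebra.comul x) = Coalgebra.comul x) :
    subProd R H Ph.rhd ∘ₗ TensorProduct.map (subAntipode R H β) LinearMap.id ∘ₗ Δ
      = eps (1 : H) := by
  have hg : Ph.rhd ∘ₗ TensorProduct.map (subAntipode R H β) LinearMap.id ∘ₗ Δ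
      = convB (LinearMap.id : Module.End R H →ₗ[R] H →ₗ[R] H) β LinearMap.id := by
    have hgl : Ph.rhd ∘ₗ TensorProduct.map (subAntipode R H β) LinearMap.id
        = TensorProduct.lift β := by
      rw [← lift_αm Ph, ← lift_comp, ← beta_eq Ph β hβ₁ hβ₂]
    have hgr : TensorProduct.lift (LinearMap.id : Module.End R H →ₗ[R] H →ₗ[R] H)
        ∘ₗ TensorProduct.map β LinearMap.id = TensorProduct.lift β := by
      rw [← lift_comp, LinearMap.id_comp]
    unfold convB
    rw [← LinearMap.comp_assoc, hgl, ← LinearMap.comp_assoc, hgr]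
  rw [subProd_act_left Ph (subAntipode R H β) (comul_subAntipode Ph β hβ₁ hβ₂ hcop), hg,
    subAntipode_eq β, act_meas Ph β (HopfAlgebra.antipode (R := R) (A := H))
      LinearMap.id hβ₁ hβ₂ hcop, cv_antipode_id, convB_eps_right,
    ev_one_beta Ph β hβ₁ hβ₂]

end BetaCompat

end PostHopfPart

end PostHopfProof

/-- In a cocommutative post-Hopf algebra, `S▷(x) = β_{x₁}(S(x₂))` is an
antipode for the bialgebra `(H, *▷, 1, Δ, ε)`:
`x₁ *▷ S▷(x₂) = ε(x)1 = S▷(x₁) *▷ x₂`. -/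
theorem subAntipode_spec (P : PostHopf R H) (hcop : _root_.IsCocomm R H)
    (β : H →ₗ[R] Module.End R H)
    (hβ₁ : convEnd R H ((TensorProduct.mk R H H).compr₂ P.rhd) β = convUnit R H)
    (hβ₂ : convEnd R H β ((TensorProduct.mk R H H).compr₂ P.rhd) = convUnit R H)
    (x : H) :
    subProd R H P.rhd
        (TensorProduct.map LinearMap.id (subAntipode R H β) (Coalgebra.comul x))
      = Coalgebra.counit (R := R) x • (1 : H) ∧
    subProd R H P.rhd
        (TensorProduct.map (subAntipode R H β) LinearMap.id (Coalgebra.comul x))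
      = Coalgebra.counit (R := R) x • (1 : H) := by
  constructor
  · have h := LinearMap.congr_fun (PostHopfProof.T1 P β hβ₁ hβ₂) x
    simpa using h
  · have h := LinearMap.congr_fun (PostHopfProof.T2 P β hβ₁ hβ₂ hcop) x
    simpa using h
end

section
/- In a cocommutative post-Hopf algebra (H, ▷), the convolution inverse β of the left multiplication map α satisfies β_x = α_{S▷(x)}; equivalently, S▷(x) ▷ y = β_x(y), where S▷ is the subadjacent antipode. -/
/-!
Post-Hopf algebras (Li–Sheng–Tang). We work over a commutative ring `R`.
`Coalgebra.comul (A := H ⊗[R] H)` refers to the standard coalgebra structure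
on the tensor product, so that `comul_rhd`/`counit_rhd` say exactly that
`▷ : H ⊗ H → H` is a coalgebra homomorphism.  Sweedler sums such as
`(x₁ ▷ y)·(x₂ ▷ z)` are expressed by applying suitable linear maps to
`Coalgebra.comul x`.
-/

open TensorProduct Coalgebra LinearMap HopfAlgebra

variable (R H : Type*) [CommRing R] [Ring H] [HopfAlgebra R H]

section AuxLemmas

variable {R H}

lemma convUnit_apply' (x : H) (y : H) :
    convUnit R H x y = Coalgebra.counit (R := R) x • y := by
  simp [convUnit, Module.algebraMap_end_apply]

lemma convEnd_unit_left (f : H →ₗ[R] Module.End R H) :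
    convEnd R H (convUnit R H) f = f := by
  have key : ∀ t : H ⊗[R] H,
      LinearMap.mul' R (Module.End R H) (TensorProduct.map (convUnit R H) f t)
        = f ((TensorProduct.lid R H) ((Coalgebra.counit (R := R)).rTensor H t)) := by
    intro t
    induction t using TensorProduct.induction_on with
    | zero => simp
    | tmul a b =>
        simp [convUnit, LinearMap.mul'_apply, Algebra.algebraMap_eq_smul_one,
          smul_mul_assoc, TensorProduct.lid_tmul]
    | add u v hu hv => simp [hu, hv]
  ext x
  simp [convEnd, key]

lemma convEnd_unit_right (f : H →ₗ[R] Module.End R H) :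
    convEnd R H f (convUnit R H) = f := by
  have key : ∀ t : H ⊗[R] H,
      LinearMap.mul' R (Module.End R H) (TensorProduct.map f (convUnit R H) t)
        = f ((TensorProduct.rid R H) ((Coalgebra.counit (R := R)).lTensor H t)) := by
    intro t
    induction t using TensorProduct.induction_on with
    | zero => simp
    | tmul a b =>
        simp [convUnit, LinearMap.mul'_apply, Algebra.algebraMap_eq_smul_one,
          mul_smul_comm, TensorProduct.rid_tmul]
    | add u v hu hv => simp [hu, hv]
  ext x
  simp [convEnd, key]

lemma convEnd_assoc (f g h : H →ₗ[R] Module.End R H) :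
    convEnd R H f (convEnd R H g h) = convEnd R H (convEnd R H f g) h := by
  have F1 : ∀ t : H ⊗[R] H,
      LinearMap.mul' R (Module.End R H) (TensorProduct.map f (convEnd R H g h) t)
        = (LinearMap.mul' R (Module.End R H) ∘ₗ
            TensorProduct.map f
              (LinearMap.mul' R (Module.End R H) ∘ₗ TensorProduct.map g h))
          ((Coalgebra.comul (R := R)).lTensor H t) := by
    intro t
    induction t using TensorProduct.induction_on with
    | zero => simp
    | tmul a b => simp [convEnd]
    | add u v hu hv => simp [hu, hv]
  have F2 : ∀ t : H ⊗[R] H,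
      LinearMap.mul' R (Module.End R H) (TensorProduct.map (convEnd R H f g) h t)
        = (LinearMap.mul' R (Module.End R H) ∘ₗ
            TensorProduct.map
              (LinearMap.mul' R (Module.End R H) ∘ₗ TensorProduct.map f g) h)
          ((Coalgebra.comul (R := R)).rTensor H t) := by
    intro t
    induction t using TensorProduct.induction_on with
    | zero => simp
    | tmul a b => simp [convEnd]
    | add u v hu hv => simp [hu, hv]
  ext x
  rw [show convEnd R H f (convEnd R H g h) x
      = LinearMap.mul' R (Module.End R H)
          (TensorProduct.map f (convEnd R H g h) (Coalgebra.comul (R := R) x)) from rfl,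
    F1, show convEnd R H (convEnd R H f g) h x
      = LinearMap.mul' R (Module.End R H)
          (TensorProduct.map (convEnd R H f g) h (Coalgebra.comul (R := R) x)) from rfl,
    F2, ← Coalgebra.coassoc_apply]
  generalize (Coalgebra.comul (R := R)).rTensor H (Coalgebra.comul (R := R) x) = w
  induction w using TensorProduct.induction_on with
  | zero => simp
  | tmul s c =>
    induction s using TensorProduct.induction_on with
    | zero => simp
    | tmul a b => simp [mul_assoc]
    | add u v hu hv => simp only [add_tmul, map_add, LinearMap.add_apply, hu, hv]
  | add u v hu hv => simp only [map_add, LinearMap.add_apply, hu, hv]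

lemma rhd_one_one (P : PostHopf R H) : P.rhd ((1 : H) ⊗ₜ[R] (1 : H)) = 1 := by
  set g := P.rhd ((1 : H) ⊗ₜ[R] (1 : H)) with hg
  have hcm : Coalgebra.comul (R := R) g = g ⊗ₜ[R] g := by
    have := LinearMap.congr_fun P.comul_rhd ((1 : H) ⊗ₜ[R] (1 : H))
    simpa [Algebra.TensorProduct.one_def] using this
  have hct : Coalgebra.counit (R := R) g = 1 := by
    have := LinearMap.congr_fun P.counit_rhd ((1 : H) ⊗ₜ[R] (1 : H))
    simpa using this
  have hmul : g * g = g := by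
    have := P.rhd_mul 1 1 1
    simpa [Algebra.TensorProduct.one_def] using this.symm
  have hS : HopfAlgebra.antipode (R := R) g * g = 1 := by
    have := HopfAlgebra.mul_antipode_rTensor_comul_apply (R := R) g
    rw [hcm] at this
    simpa [hct] using this
  calc g = 1 * g := (one_mul g).symm
    _ = (HopfAlgebra.antipode (R := R) g * g) * g := by rw [hS]
    _ = HopfAlgebra.antipode (R := R) g * (g * g) := mul_assoc _ _ _
    _ = HopfAlgebra.antipode (R := R) g * g := by rw [hmul]
    _ = 1 := hS

lemma one_rhd (P : PostHopf R H) (β : H →ₗ[R] Module.End R H)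
    (hβ₂ : convEnd R H β ((TensorProduct.mk R H H).compr₂ P.rhd) = convUnit R H)
    (y : H) : P.rhd ((1 : H) ⊗ₜ[R] y) = y := by
  have h1 : ∀ z : H, P.rhd ((1 : H) ⊗ₜ[R] P.rhd ((1 : H) ⊗ₜ[R] z))
      = P.rhd ((1 : H) ⊗ₜ[R] z) := by
    intro z
    have hsub : subProd R H P.rhd ((1 : H) ⊗ₜ[R] (1 : H)) = 1 := by
      simp [subProd, Algebra.TensorProduct.one_def, rhd_one_one P]
    have := P.rhd_rhd 1 1 z
    rwa [hsub] at this
  have h2 : ∀ w : H, β 1 (P.rhd ((1 : H) ⊗ₜ[R] w)) = w := by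
    intro w
    have h := LinearMap.congr_fun (LinearMap.congr_fun hβ₂ (1 : H)) w
    simpa [convEnd, convUnit, Algebra.TensorProduct.one_def,
      Module.algebraMap_end_apply, Module.End.mul_apply] using h
  have e1 := h2 y
  have e2 := h2 (P.rhd ((1 : H) ⊗ₜ[R] y))
  rw [h1 y] at e2
  exact e2.symm.trans e1


set_option synthInstance.maxHeartbeats 400000 in
lemma rhd_lTensor_subAntipode (P : PostHopf R H) (β : H →ₗ[R] Module.End R H)
    (hβ₁ : convEnd R H ((TensorProduct.mk R H H).compr₂ P.rhd) β = convUnit R H)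
    (z : H) :
    P.rhd (((subAntipode R H β).lTensor H) (Coalgebra.comul (R := R) z))
      = HopfAlgebra.antipode (R := R) z := by
  have C0 : ∀ (s : H ⊗[R] H) (c : H),
      P.rhd (((TensorProduct.lift (β.compl₂ (HopfAlgebra.antipode (R := R)))).lTensor H)
          ((TensorProduct.assoc R H H H) (s ⊗ₜ[R] c)))
        = LinearMap.mul' R (Module.End R H)
            (TensorProduct.map ((TensorProduct.mk R H H).compr₂ P.rhd) β s)
            (HopfAlgebra.antipode (R := R) c) := by
    intro s c
    induction s using TensorProduct.induction_on with
    | zero => simp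
    | tmul a b => simp [Module.End.mul_apply]
    | add u v hu hv => simp only [add_tmul, map_add, LinearMap.add_apply, hu, hv]
  have hσ : ((subAntipode R H β).lTensor H) (Coalgebra.comul (R := R) z)
      = ((TensorProduct.lift (β.compl₂ (HopfAlgebra.antipode (R := R)))).lTensor H)
          (((Coalgebra.comul (R := R)).lTensor H) (Coalgebra.comul (R := R) z)) := by
    rw [subAntipode, LinearMap.lTensor_comp, LinearMap.comp_apply]
  rw [hσ, ← Coalgebra.coassoc_apply]
  have C1 : ∀ t : H ⊗[R] H,
      P.rhd (((TensorProduct.lift (β.compl₂ (HopfAlgebra.antipode (R := R)))).lTensor H)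
          ((TensorProduct.assoc R H H H) (((Coalgebra.comul (R := R)).rTensor H) t)))
        = TensorProduct.lift (convEnd R H ((TensorProduct.mk R H H).compr₂ P.rhd) β)
            (((HopfAlgebra.antipode (R := R)).lTensor H) t) := by
    intro t
    induction t using TensorProduct.induction_on with
    | zero => simp
    | tmul u c =>
        rw [LinearMap.rTensor_tmul, C0, LinearMap.lTensor_tmul, TensorProduct.lift.tmul]
        simp [convEnd]
    | add u v hu hv => simp only [map_add, hu, hv]
  rw [C1, hβ₁]
  have C2 : ∀ t : H ⊗[R] H,
      TensorProduct.lift (convUnit R H) (((HopfAlgebra.antipode (R := R)).lTensor H) t)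
        = HopfAlgebra.antipode (R := R)
            ((TensorProduct.lid R H) (((Coalgebra.counit (R := R)).rTensor H) t)) := by
    intro t
    induction t using TensorProduct.induction_on with
    | zero => simp
    | tmul u w => simp [convUnit_apply', TensorProduct.lid_tmul]
    | add u v hu hv => simp only [map_add, hu, hv]
  rw [C2, Coalgebra.rTensor_counit_comul]
  simp

set_option synthInstance.maxHeartbeats 400000 in
lemma subProd_comul_subAntipode (P : PostHopf R H) (β : H →ₗ[R] Module.End R H)
    (hβ₁ : convEnd R H ((TensorProduct.mk R H H).compr₂ P.rhd) β = convUnit R H)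
    (x : H) :
    subProd R H P.rhd (((subAntipode R H β).lTensor H) (Coalgebra.comul (R := R) x))
      = Coalgebra.counit (R := R) x • (1 : H) := by
  have E0 : ∀ (s : H ⊗[R] H) (b : H),
      LinearMap.mul' R H (TensorProduct.map LinearMap.id P.rhd
          ((TensorProduct.assoc R H H H) (s ⊗ₜ[R] subAntipode R H β b)))
        = LinearMap.mul' R H (((P.rhd ∘ₗ (subAntipode R H β).lTensor H).lTensor H)
            ((TensorProduct.assoc R H H H) (s ⊗ₜ[R] b))) := by
    intro s b
    induction s using TensorProduct.induction_on with
    | zero => simp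
    | tmul p q => simp
    | add u v hu hv => simp only [add_tmul, map_add, hu, hv]
  have E1 : ∀ t : H ⊗[R] H,
      subProd R H P.rhd (((subAntipode R H β).lTensor H) t)
        = LinearMap.mul' R H (((P.rhd ∘ₗ (subAntipode R H β).lTensor H).lTensor H)
            ((TensorProduct.assoc R H H H) (((Coalgebra.comul (R := R)).rTensor H) t))) := by
    intro t
    induction t using TensorProduct.induction_on with
    | zero => simp [subProd]
    | tmul a b =>
        rw [LinearMap.lTensor_tmul, LinearMap.rTensor_tmul,
          show subProd R H P.rhd (a ⊗ₜ[R] subAntipode R H β b) = LinearMap.mul' R H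
            (TensorProduct.map LinearMap.id P.rhd ((TensorProduct.assoc R H H H)
              ((Coalgebra.comul (R := R) a) ⊗ₜ[R] subAntipode R H β b))) from by
            simp only [subProd, LinearMap.comp_apply, TensorProduct.map_tmul,
              LinearMap.id_coe, id_eq, LinearEquiv.coe_coe]]
        exact E0 _ b
    | add u v hu hv => simp only [map_add, hu, hv]
  rw [E1, Coalgebra.coassoc_apply]
  have E2 : ∀ t : H ⊗[R] H,
      ((P.rhd ∘ₗ (subAntipode R H β).lTensor H).lTensor H)
          (((Coalgebra.comul (R := R)).lTensor H) t)
        = ((HopfAlgebra.antipode (R := R)).lTensor H) t := by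
    intro t
    induction t using TensorProduct.induction_on with
    | zero => simp
    | tmul a b =>
        simp only [LinearMap.lTensor_tmul, LinearMap.comp_apply]
        rw [rhd_lTensor_subAntipode P β hβ₁ b]
    | add u v hu hv => simp only [map_add, hu, hv]
  rw [E2, HopfAlgebra.mul_antipode_lTensor_comul_apply, Algebra.algebraMap_eq_smul_one]

end AuxLemmas

/-- In a cocommutative post-Hopf algebra, the convolution inverse `β` of the
left multiplication `α` satisfies `β_x = α_{S▷(x)}`, i.e.
`β_x(y) = S▷(x) ▷ y`. -/
theorem convInv_eq_rhd_subAntipode (P : PostHopf R H) (hcop : _root_.IsCocomm R H)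
    (β : H →ₗ[R] Module.End R H)
    (hβ₁ : convEnd R H ((TensorProduct.mk R H H).compr₂ P.rhd) β = convUnit R H)
    (hβ₂ : convEnd R H β ((TensorProduct.mk R H H).compr₂ P.rhd) = convUnit R H)
    (x y : H) :
    β x y = P.rhd (subAntipode R H β x ⊗ₜ y) := by
  have H1 : ∀ (t : H ⊗[R] H) (y : H),
      LinearMap.mul' R (Module.End R H)
        (TensorProduct.map ((TensorProduct.mk R H H).compr₂ P.rhd)
          (((TensorProduct.mk R H H).compr₂ P.rhd) ∘ₗ subAntipode R H β) t) y
        = P.rhd (subProd R H P.rhd (((subAntipode R H β).lTensor H) t) ⊗ₜ[R] y) := by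
    intro t y
    induction t using TensorProduct.induction_on with
    | zero => simp
    | tmul a b =>
        simp only [TensorProduct.map_tmul, LinearMap.mul'_apply, Module.End.mul_apply,
          LinearMap.comp_apply, LinearMap.compr₂_apply, TensorProduct.mk_apply,
          LinearMap.lTensor_tmul]
        exact P.rhd_rhd a (subAntipode R H β b) y
    | add u v hu hv =>
        simp only [map_add, TensorProduct.add_tmul, LinearMap.add_apply, hu, hv]
  have hγ : convEnd R H ((TensorProduct.mk R H H).compr₂ P.rhd)
      (((TensorProduct.mk R H H).compr₂ P.rhd) ∘ₗ subAntipode R H β) = convUnit R H := by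
    apply LinearMap.ext; intro z
    apply LinearMap.ext; intro w
    rw [show convEnd R H ((TensorProduct.mk R H H).compr₂ P.rhd)
        (((TensorProduct.mk R H H).compr₂ P.rhd) ∘ₗ subAntipode R H β) z w
        = LinearMap.mul' R (Module.End R H)
          (TensorProduct.map ((TensorProduct.mk R H H).compr₂ P.rhd)
            (((TensorProduct.mk R H H).compr₂ P.rhd) ∘ₗ subAntipode R H β)
            (Coalgebra.comul (R := R) z)) w from rfl,
      H1, subProd_comul_subAntipode P β hβ₁ z, convUnit_apply']
    rw [← TensorProduct.smul_tmul', map_smul, one_rhd P β hβ₂ w]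
  have hβγ : β = ((TensorProduct.mk R H H).compr₂ P.rhd) ∘ₗ subAntipode R H β := by
    calc β = convEnd R H β (convUnit R H) := (convEnd_unit_right β).symm
      _ = convEnd R H β (convEnd R H ((TensorProduct.mk R H H).compr₂ P.rhd)
            (((TensorProduct.mk R H H).compr₂ P.rhd) ∘ₗ subAntipode R H β)) := by rw [hγ]
      _ = convEnd R H (convEnd R H β ((TensorProduct.mk R H H).compr₂ P.rhd))
            (((TensorProduct.mk R H H).compr₂ P.rhd) ∘ₗ subAntipode R H β) :=
        convEnd_assoc _ _ _
      _ = convEnd R H (convUnit R H)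
            (((TensorProduct.mk R H H).compr₂ P.rhd) ∘ₗ subAntipode R H β) := by rw [hβ₂]
      _ = ((TensorProduct.mk R H H).compr₂ P.rhd) ∘ₗ subAntipode R H β :=
        convEnd_unit_left _
  conv_lhs => rw [hβγ]
  simp
end
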